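/- Let L be a first-order language in which every function symbol has arity 0 (i.e. only constants) and every relation symbol has arity at most 1, let k : ℕ, and let L' := L.sum L_k, where L_k is the language with no function symbols and unary relation symbols R i indexed by i : Fin k. Then for every type α and every formula φ : L'.Formula α there exists a formula ψ : L.Formula α such that for every L-structure on a type M and every assignment v : α → M, ψ.Realize v holds if and only if there exists P : Fin k → M → Prop such that φ.Realize v holds in the L'-structure on M obtained by extending the given L-structure with the interpretation of each R i as P i. -/

import Mathlib

open FirstOrder Language

/-- The language with no function symbols and unary relation symbols indexed by `I`. -/
def monadicLang (I : Type) : FirstOrder.Language :=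
  { Functions := fun _ => Empty
    Relations := fun n => match n with
      | 1 => I
      | _ => Empty }

/-- The `monadicLang I`-structure on `M` interpreting the relation symbol `i` as `P i`. -/
def monadicStructure {I : Type} {M : Type*} (P : I → M → Prop) :
    (monadicLang I).Structure M where
  funMap := fun {_} f _ => f.elim
  RelMap := fun {n} r x =>
    match n, r, x with
    | 0, r, _ => r.elim
    | 1, i, x => P i (x 0)
    | _ + 2, r, _ => r.elim

set_option linter.dupNamespace false
set_option linter.unusedSectionVars false
set_option maxHeartbeats 1000000

namespace MonadicElim

-- part1 concatenated

/-! ### Counting predicate -/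

def AtLeast {X : Type*} (j : ℕ) (S : Set X) : Prop := ∃ t : Finset X, t.card = j ∧ ↑t ⊆ S

lemma atLeast_zero {X : Type*} (S : Set X) : AtLeast 0 S := ⟨∅, rfl, by simp⟩

lemma AtLeast.mono_set {X : Type*} {S T : Set X} {j : ℕ} (h : S ⊆ T) (hS : AtLeast j S) :
    AtLeast j T := by
  obtain ⟨t, ht, hsub⟩ := hS
  exact ⟨t, ht, hsub.trans h⟩

lemma AtLeast.mono_nat {X : Type*} {S : Set X} {j j' : ℕ} (h : j' ≤ j) (hS : AtLeast j S) :
    AtLeast j' S := by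
  obtain ⟨t, ht, hsub⟩ := hS
  obtain ⟨u, hu, hcard⟩ := t.exists_subset_card_eq (ht ▸ h)
  exact ⟨u, hcard, (Finset.coe_subset.2 hu).trans hsub⟩

lemma atLeast_of_infinite {X : Type*} {S : Set X} (h : S.Infinite) (j : ℕ) : AtLeast j S := by
  obtain ⟨t, hsub, hcard⟩ := h.exists_subset_card_eq j
  exact ⟨t, hcard, hsub⟩

lemma atLeast_iff_of_finite {X : Type*} {S : Set X} (h : S.Finite) {j : ℕ} :
    AtLeast j S ↔ j ≤ S.ncard := by
  constructor
  · rintro ⟨t, ht, hsub⟩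
    have := Set.ncard_le_ncard hsub h
    rwa [Set.ncard_coe_finset, ht] at this
  · intro hj
    obtain ⟨u, hu, hcard⟩ := h.toFinset.exists_subset_card_eq
      (hj.trans_eq (Set.ncard_eq_toFinset_card S h))
    exact ⟨u, hcard, (Finset.coe_subset.2 hu).trans h.coe_toFinset.subset⟩

lemma atLeast_mem {X : Type*} {S : Set X} {m : X} (h : m ∈ S) : AtLeast 1 S :=
  ⟨{m}, Finset.card_singleton m, by simpa⟩

lemma atLeast_empty {X : Type*} {j : ℕ} (h : AtLeast j (∅ : Set X)) : j = 0 := by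
  obtain ⟨t, ht, hsub⟩ := h
  have : t = ∅ := Finset.coe_eq_empty.mp (Set.subset_empty_iff.mp hsub)
  simp [this] at ht
  omega

lemma atLeast_diff_singleton {X : Type*} {S : Set X} {m : X} (hm : m ∈ S) (j : ℕ) :
    AtLeast (j + 1) S ↔ AtLeast j (S \ {m}) := by
  constructor
  · rintro ⟨t, ht, hsub⟩
    classical
    have h1 : (t.erase m).card ≥ j := by
      have := Finset.card_erase_le (a := m) (s := t)
      have h2 := Finset.pred_card_le_card_erase (a := m) (s := t)
      omega
    obtain ⟨u, hu, hcard⟩ := (t.erase m).exists_subset_card_eq h1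
    refine ⟨u, hcard, ?_⟩
    intro x hx
    have hxt := hu hx
    exact ⟨hsub (Finset.mem_of_mem_erase hxt), by simpa using (Finset.ne_of_mem_erase hxt)⟩
  · rintro ⟨t, ht, hsub⟩
    classical
    have hmt : m ∉ t := fun hmem => (hsub hmem).2 rfl
    refine ⟨insert m t, by rw [Finset.card_insert_of_notMem hmt, ht], ?_⟩
    intro x hx
    rcases Finset.mem_insert.mp (by exact_mod_cast hx) with rfl | hxt
    · exact hm
    · exact (hsub hxt).1


/-! ### Structure values and the back-and-forth relation -/

variable {K : FirstOrder.Language}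

def cVal (K : FirstOrder.Language) (M : Type*) [K.Structure M] (c : K.Functions 0) : M :=
  Structure.funMap c (fun i => i.elim0)

def rel0 (M : Type*) [K.Structure M] (r : K.Relations 0) : Prop :=
  Structure.RelMap (M := M) r (fun i => i.elim0)

def rel1 (M : Type*) [K.Structure M] (r : K.Relations 1) (m : M) : Prop :=
  Structure.RelMap r ![m]

def SType (rs1 : List (K.Relations 1)) {M M' : Type*} [K.Structure M] [K.Structure M']
    (m : M) (m' : M') : Prop :=
  ∀ r ∈ rs1, (rel1 M r m ↔ rel1 M' r m')

lemma SType.rfl {rs1 : List (K.Relations 1)} {M : Type*} [K.Structure M] (m : M) :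
    SType rs1 m m := fun _ _ => Iff.rfl

lemma SType.symm {rs1 : List (K.Relations 1)} {M M' : Type*} [K.Structure M] [K.Structure M']
    {m : M} {m' : M'} (h : SType rs1 m m') : SType rs1 m' m := fun r hr => (h r hr).symm

lemma SType.trans {rs1 : List (K.Relations 1)} {M M' M'' : Type*}
    [K.Structure M] [K.Structure M'] [K.Structure M'']
    {m : M} {m' : M'} {m'' : M''} (h : SType rs1 m m') (h' : SType rs1 m' m'') :
    SType rs1 m m'' := fun r hr => (h r hr).trans (h' r hr)

def IsNew (cs : List (K.Functions 0)) {γ : Type*} {M : Type*} [K.Structure M]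
    (w : γ → M) (m : M) : Prop :=
  (∀ g, m ≠ w g) ∧ ∀ c ∈ cs, m ≠ cVal K M c

structure Match (cs : List (K.Functions 0)) (rs0 : List (K.Relations 0))
    (rs1 : List (K.Relations 1)) (N : ℕ) {γ M M' : Type*} [K.Structure M] [K.Structure M']
    (w : γ → M) (w' : γ → M') : Prop where
  eq : ∀ g h, w g = w h ↔ w' g = w' h
  eqc : ∀ c ∈ cs, ∀ g, w g = cVal K M c ↔ w' g = cVal K M' c
  cc : ∀ c ∈ cs, ∀ d ∈ cs, cVal K M c = cVal K M d ↔ cVal K M' c = cVal K M' d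
  r0 : ∀ r ∈ rs0, rel0 M r ↔ rel0 M' r
  r1 : ∀ r ∈ rs1, ∀ g, rel1 M r (w g) ↔ rel1 M' r (w' g)
  r1c : ∀ r ∈ rs1, ∀ c ∈ cs, rel1 M r (cVal K M c) ↔ rel1 M' r (cVal K M' c)
  cnt : ∀ j ≤ N, ∀ m : M,
    (AtLeast j {x : M | SType rs1 x m ∧ IsNew cs w x} ↔
      AtLeast j {y : M' | SType rs1 m y ∧ IsNew cs w' y})
  cnt' : ∀ j ≤ N, ∀ m' : M',
    (AtLeast j {x : M | SType rs1 x m' ∧ IsNew cs w x} ↔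
      AtLeast j {y : M' | SType rs1 y m' ∧ IsNew cs w' y})

namespace Match

variable {cs : List (K.Functions 0)} {rs0 : List (K.Relations 0)} {rs1 : List (K.Relations 1)}
  {N : ℕ} {γ M M' : Type*} [K.Structure M] [K.Structure M'] {w : γ → M} {w' : γ → M'}

lemma symm (h : Match cs rs0 rs1 N w w') : Match cs rs0 rs1 N w' w where
  eq g g' := (h.eq g g').symm
  eqc c hc g := (h.eqc c hc g).symm
  cc c hc d hd := (h.cc c hc d hd).symm
  r0 r hr := (h.r0 r hr).symm
  r1 r hr g := (h.r1 r hr g).symm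
  r1c r hr c hc := (h.r1c r hr c hc).symm
  cnt j hj m' := by
    have e : {y : M | SType rs1 m' y ∧ IsNew cs w y} = {y : M | SType rs1 y m' ∧ IsNew cs w y} := by
      ext y; exact and_congr_left fun _ => ⟨SType.symm, SType.symm⟩
    rw [e]; exact (h.cnt' j hj m').symm
  cnt' j hj m := by
    have e : {y : M' | SType rs1 y m ∧ IsNew cs w' y} = {y : M' | SType rs1 m y ∧ IsNew cs w' y} := by
      ext y; exact and_congr_left fun _ => ⟨SType.symm, SType.symm⟩
    rw [e]; exact (h.cnt j hj m).symm

lemma mono {N' : ℕ} (h : Match cs rs0 rs1 N w w') (hN : N' ≤ N) : Match cs rs0 rs1 N' w w' :=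
  { h with cnt := fun j hj => h.cnt j (hj.trans hN), cnt' := fun j hj => h.cnt' j (hj.trans hN) }

lemma isNew_comp {δ : Type*} {σ : δ → γ} (hσ : Function.Surjective σ) (x : M) :
    IsNew cs (w ∘ σ) x ↔ IsNew cs w x := by
  unfold IsNew
  refine and_congr_left fun _ => ⟨fun hx g => ?_, fun hx d => hx (σ d)⟩
  obtain ⟨d, rfl⟩ := hσ g
  exact hx d

lemma comp {δ : Type*} (h : Match cs rs0 rs1 N w w') {σ : δ → γ}
    (hσ : Function.Surjective σ) : Match cs rs0 rs1 N (w ∘ σ) (w' ∘ σ) where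
  eq g g' := h.eq _ _
  eqc c hc g := h.eqc c hc _
  cc := h.cc
  r0 := h.r0
  r1 r hr g := h.r1 r hr _
  r1c := h.r1c
  cnt j hj m := by
    have e1 : {x : M | SType rs1 x m ∧ IsNew cs (w ∘ σ) x} = {x : M | SType rs1 x m ∧ IsNew cs w x} := by
      ext x; exact and_congr_right fun _ => isNew_comp hσ x
    have e2 : {y : M' | SType rs1 m y ∧ IsNew cs (w' ∘ σ) y} = {y : M' | SType rs1 m y ∧ IsNew cs w' y} := by
      ext y; exact and_congr_right fun _ => isNew_comp hσ y
    rw [e1, e2]; exact h.cnt j hj m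
  cnt' j hj m' := by
    have e1 : {x : M | SType rs1 x m' ∧ IsNew cs (w ∘ σ) x} = {x : M | SType rs1 x m' ∧ IsNew cs w x} := by
      ext x; exact and_congr_right fun _ => isNew_comp hσ x
    have e2 : {y : M' | SType rs1 y m' ∧ IsNew cs (w' ∘ σ) y} = {y : M' | SType rs1 y m' ∧ IsNew cs w' y} := by
      ext y; exact and_congr_right fun _ => isNew_comp hσ y
    rw [e1, e2]; exact h.cnt' j hj m'


/-- The key back-and-forth extension property. -/
lemma extend (h : Match cs rs0 rs1 (N + 1) w w') (m : M) :
    ∃ m' : M', Match cs rs0 rs1 N (Sum.elim w fun _ : Unit => m)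
      (Sum.elim w' fun _ : Unit => m') := by
  classical
  by_cases hg : ∃ g, m = w g
  · obtain ⟨g₀, rfl⟩ := hg
    refine ⟨w' g₀, ?_⟩
    have hnewM : ∀ x : M, IsNew cs (Sum.elim w fun _ : Unit => w g₀) x ↔ IsNew cs w x := by
      intro x
      unfold IsNew
      refine and_congr_left fun _ => ⟨fun hx g => hx (Sum.inl g), fun hx g => ?_⟩
      cases g with
      | inl g => exact hx g
      | inr _ => exact hx g₀
    have hnewM' : ∀ y : M', IsNew cs (Sum.elim w' fun _ : Unit => w' g₀) y ↔ IsNew cs w' y := by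
      intro y
      unfold IsNew
      refine and_congr_left fun _ => ⟨fun hx g => hx (Sum.inl g), fun hx g => ?_⟩
      cases g with
      | inl g => exact hx g
      | inr _ => exact hx g₀
    refine ⟨?_, ?_, h.cc, h.r0, ?_, h.r1c, ?_, ?_⟩
    · rintro (a | _) (b | _)
      · exact h.eq a b
      · exact h.eq a g₀
      · exact h.eq g₀ b
      · exact h.eq g₀ g₀
    · rintro c hc (a | _)
      · exact h.eqc c hc a
      · exact h.eqc c hc g₀
    · rintro r hr (a | _)
      · exact h.r1 r hr a
      · exact h.r1 r hr g₀
    · intro j hj m₀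
      rw [show {x : M | SType rs1 x m₀ ∧ IsNew cs (Sum.elim w fun _ : Unit => w g₀) x}
          = {x : M | SType rs1 x m₀ ∧ IsNew cs w x} from
        Set.ext fun x => and_congr_right fun _ => hnewM x,
        show {y : M' | SType rs1 m₀ y ∧ IsNew cs (Sum.elim w' fun _ : Unit => w' g₀) y}
          = {y : M' | SType rs1 m₀ y ∧ IsNew cs w' y} from
        Set.ext fun y => and_congr_right fun _ => hnewM' y]
      exact h.cnt j (hj.trans (Nat.le_succ N)) m₀
    · intro j hj m₀'
      rw [show {x : M | SType rs1 x m₀' ∧ IsNew cs (Sum.elim w fun _ : Unit => w g₀) x}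
          = {x : M | SType rs1 x m₀' ∧ IsNew cs w x} from
        Set.ext fun x => and_congr_right fun _ => hnewM x,
        show {y : M' | SType rs1 y m₀' ∧ IsNew cs (Sum.elim w' fun _ : Unit => w' g₀) y}
          = {y : M' | SType rs1 y m₀' ∧ IsNew cs w' y} from
        Set.ext fun y => and_congr_right fun _ => hnewM' y]
      exact h.cnt' j (hj.trans (Nat.le_succ N)) m₀'
  · by_cases hcst : ∃ c ∈ cs, m = cVal K M c
    · obtain ⟨c₀, hc₀, rfl⟩ := hcst
      refine ⟨cVal K M' c₀, ?_⟩
      have hnewM : ∀ x : M, IsNew cs (Sum.elim w fun _ : Unit => cVal K M c₀) x ↔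
          IsNew cs w x := by
        intro x
        unfold IsNew
        constructor
        · rintro ⟨h1, h2⟩
          exact ⟨fun g => h1 (Sum.inl g), h2⟩
        · rintro ⟨h1, h2⟩
          refine ⟨fun g => ?_, h2⟩
          cases g with
          | inl g => exact h1 g
          | inr _ => exact h2 c₀ hc₀
      have hnewM' : ∀ y : M', IsNew cs (Sum.elim w' fun _ : Unit => cVal K M' c₀) y ↔
          IsNew cs w' y := by
        intro y
        unfold IsNew
        constructor
        · rintro ⟨h1, h2⟩
          exact ⟨fun g => h1 (Sum.inl g), h2⟩
        · rintro ⟨h1, h2⟩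
          refine ⟨fun g => ?_, h2⟩
          cases g with
          | inl g => exact h1 g
          | inr _ => exact h2 c₀ hc₀
      refine ⟨?_, ?_, h.cc, h.r0, ?_, h.r1c, ?_, ?_⟩
      · rintro (a | _) (b | _)
        · exact h.eq a b
        · exact h.eqc c₀ hc₀ a
        · exact ⟨fun hh => (h.eqc c₀ hc₀ b).1 hh.symm |>.symm,
            fun hh => ((h.eqc c₀ hc₀ b).2 hh.symm).symm⟩
        · simp
      · rintro c hc (a | _)
        · exact h.eqc c hc a
        · exact h.cc c₀ hc₀ c hc
      · rintro r hr (a | _)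
        · exact h.r1 r hr a
        · exact h.r1c r hr c₀ hc₀
      · intro j hj m₀
        rw [show {x : M | SType rs1 x m₀ ∧ IsNew cs (Sum.elim w fun _ : Unit => cVal K M c₀) x}
            = {x : M | SType rs1 x m₀ ∧ IsNew cs w x} from
          Set.ext fun x => and_congr_right fun _ => hnewM x,
          show {y : M' | SType rs1 m₀ y ∧ IsNew cs (Sum.elim w' fun _ : Unit => cVal K M' c₀) y}
            = {y : M' | SType rs1 m₀ y ∧ IsNew cs w' y} from
          Set.ext fun y => and_congr_right fun _ => hnewM' y]
        exact h.cnt j (hj.trans (Nat.le_succ N)) m₀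
      · intro j hj m₀'
        rw [show {x : M | SType rs1 x m₀' ∧ IsNew cs (Sum.elim w fun _ : Unit => cVal K M c₀) x}
            = {x : M | SType rs1 x m₀' ∧ IsNew cs w x} from
          Set.ext fun x => and_congr_right fun _ => hnewM x,
          show {y : M' | SType rs1 y m₀' ∧ IsNew cs (Sum.elim w' fun _ : Unit => cVal K M' c₀) y}
            = {y : M' | SType rs1 y m₀' ∧ IsNew cs w' y} from
          Set.ext fun y => and_congr_right fun _ => hnewM' y]
        exact h.cnt' j (hj.trans (Nat.le_succ N)) m₀'
    · -- m is a new element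
      push_neg at hg hcst
      have hmnew : IsNew cs w m := ⟨hg, hcst⟩
      have h1 : AtLeast 1 {x : M | SType rs1 x m ∧ IsNew cs w x} :=
        atLeast_mem ⟨SType.rfl m, hmnew⟩
      have h1' := (h.cnt 1 (by omega) m).1 h1
      obtain ⟨t, htc, hts⟩ := h1'
      have : t.Nonempty := Finset.card_pos.mp (by omega)
      obtain ⟨m', hm't⟩ := this
      obtain ⟨hstm', hm'new⟩ := hts hm't
      refine ⟨m', ?_⟩
      have hnewM : ∀ x : M, IsNew cs (Sum.elim w fun _ : Unit => m) x ↔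
          (IsNew cs w x ∧ x ≠ m) := by
        intro x
        unfold IsNew
        constructor
        · rintro ⟨h1, h2⟩
          exact ⟨⟨fun g => h1 (Sum.inl g), h2⟩, h1 (Sum.inr ())⟩
        · rintro ⟨⟨h1, h2⟩, h3⟩
          refine ⟨fun g => ?_, h2⟩
          cases g with
          | inl g => exact h1 g
          | inr _ => exact h3
      have hnewM' : ∀ y : M', IsNew cs (Sum.elim w' fun _ : Unit => m') y ↔
          (IsNew cs w' y ∧ y ≠ m') := by
        intro y
        unfold IsNew
        constructor
        · rintro ⟨h1, h2⟩
          exact ⟨⟨fun g => h1 (Sum.inl g), h2⟩, h1 (Sum.inr ())⟩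
        · rintro ⟨⟨h1, h2⟩, h3⟩
          refine ⟨fun g => ?_, h2⟩
          cases g with
          | inl g => exact h1 g
          | inr _ => exact h3
      refine ⟨?_, ?_, h.cc, h.r0, ?_, h.r1c, ?_, ?_⟩
      · rintro (a | _) (b | _)
        · exact h.eq a b
        · constructor
          · intro hh; exact absurd hh.symm (hg a)
          · intro hh; exact absurd hh.symm (hm'new.1 a)
        · constructor
          · intro hh; exact absurd hh (hg b)
          · intro hh; exact absurd hh (hm'new.1 b)
        · simp
      · rintro c hc (a | _)
        · exact h.eqc c hc a
        · constructor
          · intro hh; exact absurd hh (hcst c hc)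
          · intro hh; exact absurd hh (hm'new.2 c hc)
      · rintro r hr (a | _)
        · exact h.r1 r hr a
        · exact hstm' r hr
      · intro j hj m₀
        have eM : {x : M | SType rs1 x m₀ ∧ IsNew cs (Sum.elim w fun _ : Unit => m) x}
            = {x : M | SType rs1 x m₀ ∧ IsNew cs w x} \ {m} := by
          ext x
          simp only [Set.mem_diff, Set.mem_setOf_eq, Set.mem_singleton_iff]
          rw [and_congr_right (fun _ => hnewM x)]
          tauto
        have eM' : {y : M' | SType rs1 m₀ y ∧ IsNew cs (Sum.elim w' fun _ : Unit => m') y}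
            = {y : M' | SType rs1 m₀ y ∧ IsNew cs w' y} \ {m'} := by
          ext y
          simp only [Set.mem_diff, Set.mem_setOf_eq, Set.mem_singleton_iff]
          rw [and_congr_right (fun _ => hnewM' y)]
          tauto
        rw [eM, eM']
        by_cases hst : SType rs1 m m₀
        · have hmmem : m ∈ {x : M | SType rs1 x m₀ ∧ IsNew cs w x} := ⟨hst, hmnew⟩
          have hm'mem : m' ∈ {y : M' | SType rs1 m₀ y ∧ IsNew cs w' y} :=
            ⟨(hst.symm.trans hstm' : SType rs1 m₀ m'), hm'new⟩
          rw [← atLeast_diff_singleton hmmem, ← atLeast_diff_singleton hm'mem]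
          exact h.cnt (j + 1) (by omega) m₀
        · have hmnot : m ∉ {x : M | SType rs1 x m₀ ∧ IsNew cs w x} := fun hmem => hst hmem.1
          have hm'not : m' ∉ {y : M' | SType rs1 m₀ y ∧ IsNew cs w' y} := by
            intro hmem
            exact hst (hstm'.trans hmem.1.symm)
          rw [Set.diff_singleton_eq_self hmnot, Set.diff_singleton_eq_self hm'not]
          exact h.cnt j (by omega) m₀
      · intro j hj m₀'
        have eM : {x : M | SType rs1 x m₀' ∧ IsNew cs (Sum.elim w fun _ : Unit => m) x}
            = {x : M | SType rs1 x m₀' ∧ IsNew cs w x} \ {m} := by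
          ext x
          simp only [Set.mem_diff, Set.mem_setOf_eq, Set.mem_singleton_iff]
          rw [and_congr_right (fun _ => hnewM x)]
          tauto
        have eM' : {y : M' | SType rs1 y m₀' ∧ IsNew cs (Sum.elim w' fun _ : Unit => m') y}
            = {y : M' | SType rs1 y m₀' ∧ IsNew cs w' y} \ {m'} := by
          ext y
          simp only [Set.mem_diff, Set.mem_setOf_eq, Set.mem_singleton_iff]
          rw [and_congr_right (fun _ => hnewM' y)]
          tauto
        rw [eM, eM']
        by_cases hst : SType rs1 m m₀'
        · have hmmem : m ∈ {x : M | SType rs1 x m₀' ∧ IsNew cs w x} := ⟨hst, hmnew⟩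
          have hm'mem : m' ∈ {y : M' | SType rs1 y m₀' ∧ IsNew cs w' y} :=
            ⟨(hstm'.symm.trans hst : SType rs1 m' m₀'), hm'new⟩
          rw [← atLeast_diff_singleton hmmem, ← atLeast_diff_singleton hm'mem]
          exact h.cnt' (j + 1) (by omega) m₀'
        · have hmnot : m ∉ {x : M | SType rs1 x m₀' ∧ IsNew cs w x} := fun hmem => hst hmem.1
          have hm'not : m' ∉ {y : M' | SType rs1 y m₀' ∧ IsNew cs w' y} := by
            intro hmem
            exact hst (hstm'.trans hmem.1)
          rw [Set.diff_singleton_eq_self hmnot, Set.diff_singleton_eq_self hm'not]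
          exact h.cnt' j (by omega) m₀'

end Match

/-! ### Syntax: restricted symbol use, quantifier depth -/

variable {α : Type*}

def constTerm {β : Type*} (c : K.Functions 0) : K.Term β := Term.func c fun i => i.elim0

lemma realize_constTerm {β M : Type*} [K.Structure M] (v : β → M) (c : K.Functions 0) :
    (constTerm c).realize v = cVal K M c := by
  show Structure.funMap c _ = Structure.funMap c _
  congr
  funext i
  exact i.elim0

def TermOk (vs : List α) (cs : List (K.Functions 0)) {n : ℕ} (t : K.Term (α ⊕ Fin n)) : Prop :=
  (∃ a ∈ vs, t = Term.var (Sum.inl a)) ∨ (∃ i, t = Term.var (Sum.inr i)) ∨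
    (∃ c ∈ cs, t = constTerm c)

lemma TermOk.mono {vs vs' : List α} {cs cs' : List (K.Functions 0)} {n : ℕ}
    {t : K.Term (α ⊕ Fin n)} (h : TermOk vs cs t) (h1 : ∀ a ∈ vs, a ∈ vs')
    (h2 : ∀ c ∈ cs, c ∈ cs') : TermOk vs' cs' t := by
  rcases h with ⟨a, ha, rfl⟩ | ⟨i, rfl⟩ | ⟨c, hc, rfl⟩
  · exact Or.inl ⟨a, h1 a ha, rfl⟩
  · exact Or.inr (Or.inl ⟨i, rfl⟩)
  · exact Or.inr (Or.inr ⟨c, h2 c hc, rfl⟩)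

inductive OnlyUses (vs : List α) (cs : List (K.Functions 0)) (rs0 : List (K.Relations 0))
    (rs1 : List (K.Relations 1)) : ∀ {n : ℕ}, K.BoundedFormula α n → Prop
  | falsum {n} : OnlyUses vs cs rs0 rs1 (n := n) BoundedFormula.falsum
  | equal {n} {t₁ t₂ : K.Term (α ⊕ Fin n)} : TermOk vs cs t₁ → TermOk vs cs t₂ →
      OnlyUses vs cs rs0 rs1 (BoundedFormula.equal t₁ t₂)
  | rel0 {n} {R : K.Relations 0} {ts : Fin 0 → K.Term (α ⊕ Fin n)} : R ∈ rs0 →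
      OnlyUses vs cs rs0 rs1 (BoundedFormula.rel R ts)
  | rel1 {n} {R : K.Relations 1} {ts : Fin 1 → K.Term (α ⊕ Fin n)} : R ∈ rs1 →
      TermOk vs cs (ts 0) → OnlyUses vs cs rs0 rs1 (BoundedFormula.rel R ts)
  | imp {n} {f g : K.BoundedFormula α n} : OnlyUses vs cs rs0 rs1 f →
      OnlyUses vs cs rs0 rs1 g → OnlyUses vs cs rs0 rs1 (f.imp g)
  | all {n} {f : K.BoundedFormula α (n + 1)} : OnlyUses vs cs rs0 rs1 f →
      OnlyUses vs cs rs0 rs1 f.all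

lemma OnlyUses.mono {vs vs' : List α} {cs cs' : List (K.Functions 0)}
    {rs0 rs0' : List (K.Relations 0)} {rs1 rs1' : List (K.Relations 1)} {n : ℕ}
    {φ : K.BoundedFormula α n} (h : OnlyUses vs cs rs0 rs1 φ)
    (h1 : ∀ a ∈ vs, a ∈ vs') (h2 : ∀ c ∈ cs, c ∈ cs')
    (h3 : ∀ r ∈ rs0, r ∈ rs0') (h4 : ∀ r ∈ rs1, r ∈ rs1') :
    OnlyUses vs' cs' rs0' rs1' φ := by
  induction h with
  | falsum => exact OnlyUses.falsum
  | equal ht₁ ht₂ => exact OnlyUses.equal (ht₁.mono h1 h2) (ht₂.mono h1 h2)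
  | rel0 hr => exact OnlyUses.rel0 (h3 _ hr)
  | rel1 hr ht => exact OnlyUses.rel1 (h4 _ hr) (ht.mono h1 h2)
  | imp _ _ ihf ihg => exact OnlyUses.imp ihf ihg
  | all _ ih => exact OnlyUses.all ih

def QD : ∀ {n : ℕ}, K.BoundedFormula α n → ℕ
  | _, BoundedFormula.falsum => 0
  | _, BoundedFormula.equal _ _ => 0
  | _, BoundedFormula.rel _ _ => 0
  | _, BoundedFormula.imp f g => max (QD f) (QD g)
  | _, BoundedFormula.all f => QD f + 1

/-! ### Invariance of realization under `Match` -/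

section Invariance

variable {vs : List α} {cs : List (K.Functions 0)} {rs0 : List (K.Relations 0)}
  {rs1 : List (K.Relations 1)} {M M' : Type*} [K.Structure M] [K.Structure M']

lemma term_val_cases {n : ℕ} {t : K.Term (α ⊕ Fin n)} (ht : TermOk vs cs t)
    (v : α → M) (xs : Fin n → M) (v' : α → M') (xs' : Fin n → M') :
    (∃ g : Fin vs.length ⊕ Fin n,
      t.realize (Sum.elim v xs) = Sum.elim (fun i => v (vs.get i)) xs g ∧
      t.realize (Sum.elim v' xs') = Sum.elim (fun i => v' (vs.get i)) xs' g) ∨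
    (∃ c ∈ cs, t.realize (Sum.elim v xs) = cVal K M c ∧
      t.realize (Sum.elim v' xs') = cVal K M' c) := by
  rcases ht with ⟨a, ha, rfl⟩ | ⟨i, rfl⟩ | ⟨c, hc, rfl⟩
  · obtain ⟨iidx, hidx⟩ := List.mem_iff_get.mp ha
    exact Or.inl ⟨Sum.inl iidx, by subst hidx; simp, by subst hidx; simp⟩
  · exact Or.inl ⟨Sum.inr i, by simp, by simp⟩
  · exact Or.inr ⟨c, hc, realize_constTerm _ _, realize_constTerm _ _⟩

lemma cross_eq {N n : ℕ} {v : α → M} {xs : Fin n → M} {v' : α → M'} {xs' : Fin n → M'}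
    (h : Match cs rs0 rs1 N (Sum.elim (fun i => v (vs.get i)) xs)
      (Sum.elim (fun i => v' (vs.get i)) xs'))
    {t₁ t₂ : K.Term (α ⊕ Fin n)} (h₁ : TermOk vs cs t₁) (h₂ : TermOk vs cs t₂) :
    (t₁.realize (Sum.elim v xs) = t₂.realize (Sum.elim v xs)) ↔
      (t₁.realize (Sum.elim v' xs') = t₂.realize (Sum.elim v' xs')) := by
  rcases term_val_cases h₁ v xs v' xs' with ⟨g₁, e₁, e₁'⟩ | ⟨c₁, hc₁, e₁, e₁'⟩ <;>
    rcases term_val_cases h₂ v xs v' xs' with ⟨g₂, e₂, e₂'⟩ | ⟨c₂, hc₂, e₂, e₂'⟩ <;>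
    rw [e₁, e₁', e₂, e₂']
  · exact h.eq g₁ g₂
  · exact h.eqc c₂ hc₂ g₁
  · rw [eq_comm, @eq_comm M']
    exact h.eqc c₁ hc₁ g₂
  · exact h.cc c₁ hc₁ c₂ hc₂

lemma cross_rel1 {N n : ℕ} {v : α → M} {xs : Fin n → M} {v' : α → M'} {xs' : Fin n → M'}
    (h : Match cs rs0 rs1 N (Sum.elim (fun i => v (vs.get i)) xs)
      (Sum.elim (fun i => v' (vs.get i)) xs'))
    {t : K.Term (α ⊕ Fin n)} (ht : TermOk vs cs t) {r : K.Relations 1} (hr : r ∈ rs1) :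
    rel1 M r (t.realize (Sum.elim v xs)) ↔ rel1 M' r (t.realize (Sum.elim v' xs')) := by
  rcases term_val_cases ht v xs v' xs' with ⟨g, e, e'⟩ | ⟨c, hc, e, e'⟩ <;> rw [e, e']
  · exact h.r1 r hr g
  · exact h.r1c r hr c hc

def snocMap (p n : ℕ) : (Fin p ⊕ Fin (n + 1)) → ((Fin p ⊕ Fin n) ⊕ Unit) :=
  Sum.elim (fun i => Sum.inl (Sum.inl i))
    (fun j => Fin.lastCases (Sum.inr ()) (fun j' => Sum.inl (Sum.inr j')) j)

lemma snocMap_surjective (p n : ℕ) : Function.Surjective (snocMap p n) := by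
  rintro ((i | j) | ⟨⟩)
  · exact ⟨Sum.inl i, rfl⟩
  · exact ⟨Sum.inr j.castSucc, by simp [snocMap]⟩
  · exact ⟨Sum.inr (Fin.last n), by simp [snocMap]⟩

lemma elim_comp_snocMap {X : Type*} (p : ℕ) (a : Fin p → X) {n : ℕ} (xs : Fin n → X) (m : X) :
    (Sum.elim (Sum.elim a xs) (fun _ : Unit => m)) ∘ (snocMap p n) = Sum.elim a (Fin.snoc xs m) := by
  funext x
  rcases x with i | j
  · rfl
  · induction j using Fin.lastCases with
    | last => simp [snocMap]
    | cast j' => simp [snocMap]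

lemma match_snoc {N n : ℕ} {v : α → M} {xs : Fin n → M} {v' : α → M'} {xs' : Fin n → M'}
    {m : M} {m' : M'}
    (h : Match cs rs0 rs1 N
      (Sum.elim (Sum.elim (fun i => v (vs.get i)) xs) (fun _ : Unit => m))
      (Sum.elim (Sum.elim (fun i => v' (vs.get i)) xs') (fun _ : Unit => m'))) :
    Match cs rs0 rs1 N (Sum.elim (fun i => v (vs.get i)) (Fin.snoc xs m))
      (Sum.elim (fun i => v' (vs.get i)) (Fin.snoc xs' m')) := by
  have hc := h.comp (snocMap_surjective vs.length n)
  rw [show Sum.elim (fun i => v (vs.get i)) (Fin.snoc xs m)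
      = (Sum.elim (Sum.elim (fun i => v (vs.get i)) xs) (fun _ : Unit => m)) ∘ (snocMap vs.length n)
      from (elim_comp_snocMap _ _ _ _).symm,
    show Sum.elim (fun i => v' (vs.get i)) (Fin.snoc xs' m')
      = (Sum.elim (Sum.elim (fun i => v' (vs.get i)) xs') (fun _ : Unit => m')) ∘ (snocMap vs.length n)
      from (elim_comp_snocMap _ _ _ _).symm]
  exact hc

lemma match_zero {N : ℕ} {w : Fin vs.length → M} {w' : Fin vs.length → M'}
    (h : Match cs rs0 rs1 N w w') (xs : Fin 0 → M) (xs' : Fin 0 → M') :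
    Match cs rs0 rs1 N (Sum.elim w xs) (Sum.elim w' xs') := by
  have hσ : Function.Surjective (Sum.elim id Fin.elim0 : Fin vs.length ⊕ Fin 0 → Fin vs.length) :=
    fun i => ⟨Sum.inl i, rfl⟩
  have hc := h.comp hσ
  have e1 : Sum.elim w xs = w ∘ (Sum.elim id Fin.elim0 : Fin vs.length ⊕ Fin 0 → Fin vs.length) := by
    funext x
    rcases x with i | j
    · rfl
    · exact j.elim0
  have e2 : Sum.elim w' xs' = w' ∘ (Sum.elim id Fin.elim0 : Fin vs.length ⊕ Fin 0 → Fin vs.length) := by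
    funext x
    rcases x with i | j
    · rfl
    · exact j.elim0
  rw [e1, e2]
  exact hc

lemma rel0_realize {n : ℕ} (R : K.Relations 0) (ts : Fin 0 → K.Term (α ⊕ Fin n))
    (v : α → M) (xs : Fin n → M) :
    (BoundedFormula.rel R ts).Realize v xs ↔ rel0 M R := by
  show Structure.RelMap R _ ↔ _
  rw [show (fun i => Term.realize (Sum.elim v xs) (ts i)) = (fun i : Fin 0 => i.elim0) from
    funext fun i => i.elim0]
  exact Iff.rfl

lemma rel1_realize {n : ℕ} (R : K.Relations 1) (ts : Fin 1 → K.Term (α ⊕ Fin n))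
    (v : α → M) (xs : Fin n → M) :
    (BoundedFormula.rel R ts).Realize v xs ↔ rel1 M R ((ts 0).realize (Sum.elim v xs)) := by
  show Structure.RelMap R _ ↔ _
  rw [show (fun i => Term.realize (Sum.elim v xs) (ts i))
      = ![Term.realize (Sum.elim v xs) (ts 0)] from
    funext fun i => by rw [Subsingleton.elim i 0]; rfl]
  exact Iff.rfl

theorem invariance {n : ℕ} (φ : K.BoundedFormula α n) : ∀ N : ℕ, QD φ ≤ N →
    OnlyUses vs cs rs0 rs1 φ →
    ∀ (v : α → M) (xs : Fin n → M) (v' : α → M') (xs' : Fin n → M'),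
    Match cs rs0 rs1 N (Sum.elim (fun i => v (vs.get i)) xs)
      (Sum.elim (fun i => v' (vs.get i)) xs') →
    (φ.Realize v xs ↔ φ.Realize v' xs') := by
  induction φ with
  | falsum =>
    intro N _ _ v xs v' xs' _
    simp [BoundedFormula.Realize]
  | equal t₁ t₂ =>
    intro N _ hO v xs v' xs' h
    cases hO with
    | equal ht₁ ht₂ =>
      exact cross_eq h ht₁ ht₂
  | rel R ts =>
    intro N _ hO v xs v' xs' h
    cases hO with
    | rel0 hr =>
      rw [rel0_realize, rel0_realize]
      exact h.r0 _ hr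
    | rel1 hr ht =>
      rw [rel1_realize, rel1_realize]
      exact cross_rel1 h ht hr
  | imp f g ihf ihg =>
    intro N hN hO v xs v' xs' h
    have hNf : QD f ≤ N := le_trans (le_max_left _ _) hN
    have hNg : QD g ≤ N := le_trans (le_max_right _ _) hN
    cases hO with
    | imp hOf hOg =>
      simp only [BoundedFormula.realize_imp]
      exact imp_congr (ihf N hNf hOf v xs v' xs' h) (ihg N hNg hOg v xs v' xs' h)
  | all f ih =>
    intro N hN hO v xs v' xs' h
    have hN' : QD f + 1 ≤ N := hN
    cases hO with
    | all hOf =>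
      have hm : Match cs rs0 rs1 (QD f + 1) (Sum.elim (fun i => v (vs.get i)) xs)
          (Sum.elim (fun i => v' (vs.get i)) xs') := h.mono hN'
      simp only [BoundedFormula.realize_all]
      constructor
      · intro H m'
        obtain ⟨m, hext⟩ := hm.symm.extend m'
        exact (ih (QD f) le_rfl hOf v (Fin.snoc xs m) v' (Fin.snoc xs' m')
          (match_snoc hext.symm)).1 (H m)
      · intro H m
        obtain ⟨m', hext⟩ := hm.extend m
        exact (ih (QD f) le_rfl hOf v (Fin.snoc xs m) v' (Fin.snoc xs' m')
          (match_snoc hext)).2 (H m')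

end Invariance

/-! ### Symbol extraction -/

lemma term_extract (hfun : ∀ n, K.Functions n → n = 0) {n : ℕ} (t : K.Term (α ⊕ Fin n)) :
    ∃ (vs : List α) (cs : List (K.Functions 0)), TermOk vs cs t := by
  cases t with
  | var x =>
    cases x with
    | inl a => exact ⟨[a], [], Or.inl ⟨a, by simp, rfl⟩⟩
    | inr i => exact ⟨[], [], Or.inr (Or.inl ⟨i, rfl⟩)⟩
  | func f ts =>
    have h0 := hfun _ f
    subst h0
    refine ⟨[], [f], Or.inr (Or.inr ⟨f, by simp, ?_⟩)⟩
    show Term.func f ts = constTerm f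
    unfold constTerm
    congr
    funext i
    exact i.elim0

lemma rel_extract (hfun : ∀ n, K.Functions n → n = 0) {n : ℕ} :
    ∀ (l : ℕ), l ≤ 1 → ∀ (R : K.Relations l) (ts : Fin l → K.Term (α ⊕ Fin n)),
    ∃ (vs : List α) (cs : List (K.Functions 0)) (rs0 : List (K.Relations 0))
      (rs1 : List (K.Relations 1)), OnlyUses vs cs rs0 rs1 (BoundedFormula.rel R ts)
  | 0, _, R, ts => ⟨[], [], [R], [], OnlyUses.rel0 (by simp)⟩
  | 1, _, R, ts => by
    obtain ⟨vs, cs, ht⟩ := term_extract hfun (ts 0)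
    exact ⟨vs, cs, [], [R], OnlyUses.rel1 (by simp) ht⟩
  | (l + 2), h, _, _ => absurd h (by omega)

lemma formula_extract (hfun : ∀ n, K.Functions n → n = 0) (hrel : ∀ n, K.Relations n → n ≤ 1)
    {n : ℕ} (φ : K.BoundedFormula α n) :
    ∃ (vs : List α) (cs : List (K.Functions 0)) (rs0 : List (K.Relations 0))
      (rs1 : List (K.Relations 1)), OnlyUses vs cs rs0 rs1 φ := by
  induction φ with
  | falsum => exact ⟨[], [], [], [], OnlyUses.falsum⟩
  | equal t₁ t₂ =>
    obtain ⟨vs₁, cs₁, h₁⟩ := term_extract hfun t₁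
    obtain ⟨vs₂, cs₂, h₂⟩ := term_extract hfun t₂
    exact ⟨vs₁ ++ vs₂, cs₁ ++ cs₂, [], [],
      OnlyUses.equal
        (h₁.mono (fun a ha => by simp [ha]) (fun c hc => by simp [hc]))
        (h₂.mono (fun a ha => by simp [ha]) (fun c hc => by simp [hc]))⟩
  | rel R ts => exact rel_extract hfun _ (hrel _ R) R ts
  | imp f g ihf ihg =>
    obtain ⟨vs₁, cs₁, rs0₁, rs1₁, h₁⟩ := ihf
    obtain ⟨vs₂, cs₂, rs0₂, rs1₂, h₂⟩ := ihg
    exact ⟨vs₁ ++ vs₂, cs₁ ++ cs₂, rs0₁ ++ rs0₂, rs1₁ ++ rs1₂,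
      OnlyUses.imp
        (h₁.mono (fun a ha => by simp [ha]) (fun c hc => by simp [hc])
          (fun r hr => by simp [hr]) (fun r hr => by simp [hr]))
        (h₂.mono (fun a ha => by simp [ha]) (fun c hc => by simp [hc])
          (fun r hr => by simp [hr]) (fun r hr => by simp [hr]))⟩
  | all f ih =>
    obtain ⟨vs, cs, rs0, rs1, hf⟩ := ih
    exact ⟨vs, cs, rs0, rs1, OnlyUses.all hf⟩

/-! ### Combinatorics: allocation, pigeonhole, relabeling -/

section Combinatorics

variable {Y : Type*} {Λ : Type*} [Fintype Λ] [DecidableEq Λ]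

lemma alloc_list : ∀ (l : List Λ) (t : Λ → ℕ) (W : Finset Y), (l.map t).sum ≤ W.card →
    ∃ T : Λ → Finset Y, (∀ σ ∈ l, (T σ).card = t σ ∧ T σ ⊆ W) ∧ (∀ σ ∉ l, T σ = ∅) ∧
      (∀ σ σ', σ ≠ σ' → Disjoint (T σ) (T σ'))
  | [], t, W, _ => ⟨fun _ => ∅, by simp, by simp, by simp⟩
  | σ₀ :: l, t, W, h => by
    classical
    simp only [List.map_cons, List.sum_cons] at h
    obtain ⟨W₀, hW₀sub, hW₀card⟩ := W.exists_subset_card_eq (le_trans (Nat.le_add_right _ _) h)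
    obtain ⟨T, hT, hTe, hdisj⟩ := alloc_list l t (W \ W₀) (by
      rw [Finset.card_sdiff_of_subset hW₀sub]
      omega)
    have hTW : ∀ σ, T σ ⊆ W \ W₀ := by
      intro σ
      by_cases hσ : σ ∈ l
      · exact (hT σ hσ).2
      · rw [hTe σ hσ]
        exact Finset.empty_subset _
    refine ⟨fun σ => if σ = σ₀ then W₀ else T σ, ?_, ?_, ?_⟩
    · intro σ hσ
      by_cases hs : σ = σ₀
      · subst hs
        simp [hW₀card, hW₀sub]
      · simp only [if_neg hs]
        rcases List.mem_cons.mp hσ with rfl | hmem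
        · exact absurd rfl hs
        · exact ⟨(hT σ hmem).1, (hT σ hmem).2.trans Finset.sdiff_subset⟩
    · intro σ hσ
      have h1 : σ ≠ σ₀ := fun hs => hσ (hs ▸ List.mem_cons_self)
      have h2 : σ ∉ l := fun hs => hσ (List.mem_cons_of_mem _ hs)
      simp only [if_neg h1]
      exact hTe σ h2
    · intro σ σ' hss
      by_cases hs : σ = σ₀ <;> by_cases hs' : σ' = σ₀
      · exact absurd (hs.trans hs'.symm) hss
      · simp only [if_pos hs, if_neg hs']
        exact Finset.disjoint_left.mpr fun x hx hx' => (Finset.mem_sdiff.mp ((hTW σ') hx')).2 hx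
      · simp only [if_neg hs, if_pos hs']
        exact Finset.disjoint_left.mpr fun x hx hx' => (Finset.mem_sdiff.mp ((hTW σ) hx)).2 hx'
      · simp only [if_neg hs, if_neg hs']
        exact hdisj σ σ' hss

lemma pigeonhole (F : Y → Λ) (S : Set Y) (q : ℕ) (hq : 1 ≤ q) (hΛ : 1 ≤ Fintype.card Λ)
    (h : AtLeast (Fintype.card Λ * q) S) : ∃ σ, AtLeast q {y | y ∈ S ∧ F y = σ} := by
  classical
  obtain ⟨W, hWc, hWs⟩ := h
  by_contra hno
  push_neg at hno
  have hfib : ∀ σ, (W.filter (fun y => F y = σ)).card ≤ q - 1 := by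
    intro σ
    by_contra hgt
    push_neg at hgt
    have hge : q ≤ (W.filter (fun y => F y = σ)).card := by omega
    obtain ⟨u, hu, huc⟩ := (W.filter (fun y => F y = σ)).exists_subset_card_eq hge
    refine hno σ ⟨u, huc, ?_⟩
    intro y hy
    have := hu hy
    rw [Finset.mem_filter] at this
    exact ⟨hWs this.1, this.2⟩
  have hsum : W.card = ∑ σ : Λ, (W.filter (fun y => F y = σ)).card :=
    Finset.card_eq_sum_card_fiberwise fun x _ => Finset.mem_univ (F x)
  have hle : ∑ σ : Λ, (W.filter (fun y => F y = σ)).card ≤ Fintype.card Λ * (q - 1) := by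
    calc ∑ σ : Λ, (W.filter (fun y => F y = σ)).card ≤ ∑ _σ : Λ, (q - 1) :=
          Finset.sum_le_sum fun σ _ => hfib σ
      _ = Fintype.card Λ * (q - 1) := by
          rw [Finset.sum_const, Finset.card_univ, smul_eq_mul]
  rw [hWc] at hsum
  have : Fintype.card Λ * q ≤ Fintype.card Λ * (q - 1) := hsum ▸ hle
  have := Nat.le_of_mul_le_mul_left this (by omega)
  omega


open Classical in
noncomputable def capN {X : Type*} (B : ℕ) (S : Set X) : ℕ :=
  if S.Infinite then B else min B S.ncard

lemma atLeast_iff_capN {X : Type*} {B j : ℕ} {S : Set X} (hj : j ≤ B) :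
    AtLeast j S ↔ j ≤ capN B S := by
  unfold capN
  split_ifs with h
  · simp only [iff_true_intro (atLeast_of_infinite h j), true_iff]
    omega
  · rw [atLeast_iff_of_finite (Set.not_infinite.mp h)]
    omega

lemma relabel_lemma {X : Type*} [Nonempty Λ] (S : Set X) (S' : Set Y) (F : X → Λ) (q : ℕ)
    (h : ∀ j ≤ Fintype.card Λ * (q + 1), (AtLeast j S ↔ AtLeast j S')) :
    ∃ G : Y → Λ, ∀ (σ : Λ) (j : ℕ), j ≤ q →
      (AtLeast j {x | x ∈ S ∧ F x = σ} ↔ AtLeast j {y | y ∈ S' ∧ G y = σ}) := by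
  classical
  rcases Nat.eq_zero_or_pos q with rfl | hq
  · refine ⟨fun _ => Classical.arbitrary Λ, ?_⟩
    intro σ j hj
    interval_cases j
    exact iff_of_true (atLeast_zero _) (atLeast_zero _)
  set B := Fintype.card Λ * (q + 1) with hB
  have hcard : 1 ≤ Fintype.card Λ := Fintype.card_pos
  by_cases hbig : AtLeast B S
  · have hbig' : AtLeast B S' := (h B le_rfl).1 hbig
    set t : Λ → ℕ := fun σ => capN q {x | x ∈ S ∧ F x = σ} with ht
    have htq : ∀ σ, t σ ≤ q := by
      intro σ
      simp only [ht, capN]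
      split_ifs <;> omega
    have hkey : ∀ σ, ∀ j ≤ q, (AtLeast j {x | x ∈ S ∧ F x = σ} ↔ j ≤ t σ) :=
      fun σ j hj => atLeast_iff_capN hj
    obtain ⟨σs, hσs⟩ := pigeonhole F S q hq hcard
      (hbig.mono_nat (Nat.mul_le_mul_left _ (by omega)))
    have hσsq : t σs = q := le_antisymm (htq _) ((hkey σs q le_rfl).1 hσs)
    have hsum : ∑ σ : Λ, t σ ≤ Fintype.card Λ * q := by
      calc ∑ σ : Λ, t σ ≤ ∑ _σ : Λ, q := Finset.sum_le_sum fun σ _ => htq σ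
        _ = Fintype.card Λ * q := by rw [Finset.sum_const, Finset.card_univ, smul_eq_mul]
    obtain ⟨W, hWc, hWs⟩ := hbig'.mono_nat
      (hsum.trans (Nat.mul_le_mul_left _ (by omega)))
    obtain ⟨T, hT, hTe, hdisj⟩ := alloc_list Finset.univ.toList t W (by
      rw [Finset.sum_map_toList, hWc])
    have hTall : ∀ σ, (T σ).card = t σ ∧ T σ ⊆ W := fun σ =>
      hT σ (Finset.mem_toList.mpr (Finset.mem_univ σ))
    set G : Y → Λ := fun y => if h : ∃ σ, y ∈ T σ then h.choose else σs with hG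
    have hGT : ∀ σ, ∀ y ∈ T σ, G y = σ := by
      intro σ y hy
      have hex : ∃ σ₁, y ∈ T σ₁ := ⟨σ, hy⟩
      have hch : y ∈ T hex.choose := hex.choose_spec
      have heq : hex.choose = σ := by
        by_contra hne
        exact (Finset.disjoint_left.mp (hdisj _ _ hne) hch) hy
      simp only [hG, dif_pos hex, heq]
    refine ⟨G, ?_⟩
    intro σ j hj
    by_cases hss : σ = σs
    · subst hss
      have h1 : AtLeast q (↑(T σ) : Set Y) := ⟨T σ, (hTall σ).1.trans hσsq, subset_rfl⟩
      refine iff_of_true (hσs.mono_nat hj) (AtLeast.mono_nat hj (h1.mono_set ?_))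
      intro y hy
      exact ⟨hWs ((hTall σ).2 hy), hGT σ y hy⟩
    · have hset : {y | y ∈ S' ∧ G y = σ} = ↑(T σ) := by
        ext y
        simp only [Set.mem_setOf_eq, Finset.mem_coe]
        constructor
        · rintro ⟨hyS, hyG⟩
          by_cases hex : ∃ σ₁, y ∈ T σ₁
          · have hch : y ∈ T hex.choose := hex.choose_spec
            have : G y = hex.choose := by simp only [hG, dif_pos hex]
            rw [this] at hyG
            rwa [hyG] at hch
          · exfalso
            have : G y = σs := by simp only [hG, dif_neg hex]
            exact hss (hyG ▸ this)
        · intro hy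
          exact ⟨hWs ((hTall σ).2 hy), hGT σ y hy⟩
      rw [hset]
      have hTiff : AtLeast j (↑(T σ) : Set Y) ↔ j ≤ t σ := by
        rw [atLeast_iff_of_finite ((T σ).finite_toSet), Set.ncard_coe_finset, (hTall σ).1]
      rw [hTiff]
      exact hkey σ j hj
  · have hbig' : ¬ AtLeast B S' := fun hh => hbig ((h B le_rfl).2 hh)
    have hSfin : S.Finite := Set.not_infinite.mp fun hi => hbig (atLeast_of_infinite hi B)
    have hS'fin : S'.Finite := Set.not_infinite.mp fun hi => hbig' (atLeast_of_infinite hi B)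
    have hSlt : S.ncard < B := by
      by_contra hge
      exact hbig ((atLeast_iff_of_finite hSfin).2 (by omega))
    have hS'lt : S'.ncard < B := by
      by_contra hge
      exact hbig' ((atLeast_iff_of_finite hS'fin).2 (by omega))
    have hceq : S.ncard = S'.ncard := by
      have h1 : AtLeast S.ncard S' := (h _ (by omega)).1 ((atLeast_iff_of_finite hSfin).2 le_rfl)
      have h2 : AtLeast S'.ncard S := (h _ (by omega)).2 ((atLeast_iff_of_finite hS'fin).2 le_rfl)
      have h3 := (atLeast_iff_of_finite hS'fin).1 h1
      have h4 := (atLeast_iff_of_finite hSfin).1 h2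
      omega
    have hc2 : hS'fin.toFinset.card = hSfin.toFinset.card := by
      rw [← Set.ncard_eq_toFinset_card _ hSfin, ← Set.ncard_eq_toFinset_card _ hS'fin, hceq]
    set e := Finset.equivOfCardEq hc2 with he
    set G : Y → Λ := fun y =>
      if h : y ∈ hS'fin.toFinset then F ((e ⟨y, h⟩ : hSfin.toFinset) : X)
      else Classical.arbitrary Λ with hG
    refine ⟨G, fun σ j _ => ?_⟩
    set A : Finset X := hSfin.toFinset.filter (fun x => F x = σ) with hA
    set A' : Finset Y := hS'fin.toFinset.filter (fun y => G y = σ) with hA'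
    have hsetA : {x | x ∈ S ∧ F x = σ} = ↑A := by
      ext x
      simp [hA, Set.Finite.mem_toFinset]
    have hsetA' : {y | y ∈ S' ∧ G y = σ} = ↑A' := by
      ext y
      simp [hA', Set.Finite.mem_toFinset]
    have hcardAA : A'.card = A.card := by
      apply Finset.card_bij
        (fun y hy => ((e ⟨y, (Finset.mem_filter.mp hy).1⟩ : hSfin.toFinset) : X))
      · intro y hy
        obtain ⟨hyS, hyG⟩ := Finset.mem_filter.mp hy
        refine Finset.mem_filter.mpr ⟨(e ⟨y, hyS⟩).2, ?_⟩
        have hGy : G y = F ((e ⟨y, hyS⟩ : hSfin.toFinset) : X) := by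
          simp only [hG, dif_pos hyS]
        rw [← hGy]
        exact hyG
      · intro y1 h1 y2 h2 heq
        have := e.injective (Subtype.ext heq)
        exact Subtype.mk_eq_mk.mp this
      · intro x hx
        obtain ⟨hxS, hxF⟩ := Finset.mem_filter.mp hx
        refine ⟨((e.symm ⟨x, hxS⟩ : hS'fin.toFinset) : Y), ?_, ?_⟩
        · refine Finset.mem_filter.mpr ⟨(e.symm ⟨x, hxS⟩).2, ?_⟩
          have hGy : G ((e.symm ⟨x, hxS⟩ : hS'fin.toFinset) : Y)
              = F ((e ⟨((e.symm ⟨x, hxS⟩ : hS'fin.toFinset) : Y), (e.symm ⟨x, hxS⟩).2⟩ :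
                hSfin.toFinset) : X) := by
            simp only [hG, dif_pos (e.symm ⟨x, hxS⟩).2]
          rw [hGy]
          have : (⟨((e.symm ⟨x, hxS⟩ : hS'fin.toFinset) : Y), (e.symm ⟨x, hxS⟩).2⟩ :
              hS'fin.toFinset) = e.symm ⟨x, hxS⟩ := Subtype.ext rfl
          rw [this, Equiv.apply_symm_apply]
          exact hxF
        · have : (⟨((e.symm ⟨x, hxS⟩ : hS'fin.toFinset) : Y), (e.symm ⟨x, hxS⟩).2⟩ :
              hS'fin.toFinset) = e.symm ⟨x, hxS⟩ := Subtype.ext rfl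
          rw [this, Equiv.apply_symm_apply]
      done
    rw [hsetA, hsetA', atLeast_iff_of_finite A.finite_toSet,
      atLeast_iff_of_finite A'.finite_toSet, Set.ncard_coe_finset, Set.ncard_coe_finset, hcardAA]

end Combinatorics

/-! ### The finite abstraction of a structure with valuation -/

section Abstraction

variable (vs : List α) (cs : List (K.Functions 0)) (rs0 : List (K.Relations 0))
  (rs1 : List (K.Relations 1)) (B : ℕ)

def AbsTy (p d z u B : ℕ) : Type :=
  (Fin p → Fin p → Bool) × (Fin p → Fin d → Bool) × (Fin d → Fin d → Bool) × (Fin z → Bool) ×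
  (Fin p → Fin u → Bool) × (Fin d → Fin u → Bool) × ((Fin u → Bool) → Fin (B + 1))

instance (p d z u B : ℕ) : Fintype (AbsTy p d z u B) := by unfold AbsTy; infer_instance
noncomputable instance (p d z u B : ℕ) : DecidableEq (AbsTy p d z u B) := Classical.decEq _

variable {M : Type*} [K.Structure M]

open Classical in
noncomputable def patM (x : M) : Fin rs1.length → Bool := fun l => decide (rel1 M (rs1.get l) x)

lemma stype_iff_pat {M' : Type*} [K.Structure M'] (x : M) (y : M') :
    SType rs1 x y ↔ patM rs1 x = patM rs1 y := by
  rw [funext_iff]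
  unfold SType patM
  constructor
  · intro h l
    exact decide_eq_decide.2 (h _ (List.get_mem rs1 l))
  · intro h r hr
    obtain ⟨l, rfl⟩ := List.mem_iff_get.mp hr
    exact decide_eq_decide.1 (h l)

open Classical in
noncomputable def absOf (v : α → M) :
    AbsTy vs.length cs.length rs0.length rs1.length B :=
  ( fun i j => decide (v (vs.get i) = v (vs.get j)),
    fun i c => decide (v (vs.get i) = cVal K M (cs.get c)),
    fun c d => decide (cVal K M (cs.get c) = cVal K M (cs.get d)),
    fun r => decide (rel0 M (rs0.get r)),
    fun i l => decide (rel1 M (rs1.get l) (v (vs.get i))),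
    fun c l => decide (rel1 M (rs1.get l) (cVal K M (cs.get c))),
    fun τ => ⟨capN B {x | patM rs1 x = τ ∧ IsNew cs (fun i => v (vs.get i)) x}, by
      unfold capN
      split_ifs <;> omega⟩ )

lemma match_of_absOf_eq {M' : Type*} [K.Structure M'] {v : α → M} {v' : α → M'}
    (h : absOf vs cs rs0 rs1 B v = absOf vs cs rs0 rs1 B v') :
    Match cs rs0 rs1 B (fun i => v (vs.get i)) (fun i => v' (vs.get i)) := by
  have h1 := congrArg (fun a : AbsTy vs.length cs.length rs0.length rs1.length B => a.1) h
  have h2 := congrArg (fun a : AbsTy vs.length cs.length rs0.length rs1.length B => a.2.1) h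
  have h3 := congrArg (fun a : AbsTy vs.length cs.length rs0.length rs1.length B => a.2.2.1) h
  have h4 := congrArg (fun a : AbsTy vs.length cs.length rs0.length rs1.length B => a.2.2.2.1) h
  have h5 := congrArg
    (fun a : AbsTy vs.length cs.length rs0.length rs1.length B => a.2.2.2.2.1) h
  have h6 := congrArg
    (fun a : AbsTy vs.length cs.length rs0.length rs1.length B => a.2.2.2.2.2.1) h
  have h7 := congrArg
    (fun a : AbsTy vs.length cs.length rs0.length rs1.length B => a.2.2.2.2.2.2) h
  simp only [absOf] at h1 h2 h3 h4 h5 h6 h7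
  have q1 : ∀ i j, (v (vs.get i) = v (vs.get j)) ↔ (v' (vs.get i) = v' (vs.get j)) := by
    intro i j
    have := congrFun (congrFun h1 i) j
    exact decide_eq_decide.1 this
  have q2 : ∀ i c, (v (vs.get i) = cVal K M (cs.get c)) ↔
      (v' (vs.get i) = cVal K M' (cs.get c)) := by
    intro i c
    exact decide_eq_decide.1 (congrFun (congrFun h2 i) c)
  have q3 : ∀ c d, (cVal K M (cs.get c) = cVal K M (cs.get d)) ↔
      (cVal K M' (cs.get c) = cVal K M' (cs.get d)) := by
    intro c d
    exact decide_eq_decide.1 (congrFun (congrFun h3 c) d)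
  have q4 : ∀ r, rel0 M (rs0.get r) ↔ rel0 M' (rs0.get r) := by
    intro r
    exact decide_eq_decide.1 (congrFun h4 r)
  have q5 : ∀ i l, rel1 M (rs1.get l) (v (vs.get i)) ↔ rel1 M' (rs1.get l) (v' (vs.get i)) := by
    intro i l
    exact decide_eq_decide.1 (congrFun (congrFun h5 i) l)
  have q6 : ∀ c l, rel1 M (rs1.get l) (cVal K M (cs.get c)) ↔
      rel1 M' (rs1.get l) (cVal K M' (cs.get c)) := by
    intro c l
    exact decide_eq_decide.1 (congrFun (congrFun h6 c) l)
  have q7 : ∀ τ, capN B {x : M | patM rs1 x = τ ∧ IsNew cs (fun i => v (vs.get i)) x}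
      = capN B {y : M' | patM rs1 y = τ ∧ IsNew cs (fun i => v' (vs.get i)) y} := by
    intro τ
    have := congrArg Fin.val (congrFun h7 τ)
    exact this
  refine ⟨q1, ?_, ?_, ?_, ?_, ?_, ?_, ?_⟩
  · intro c hc i
    obtain ⟨cidx, rfl⟩ := List.mem_iff_get.mp hc
    exact q2 i cidx
  · intro c hc d hd
    obtain ⟨cidx, rfl⟩ := List.mem_iff_get.mp hc
    obtain ⟨didx, rfl⟩ := List.mem_iff_get.mp hd
    exact q3 cidx didx
  · intro r hr
    obtain ⟨ridx, rfl⟩ := List.mem_iff_get.mp hr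
    exact q4 ridx
  · intro r hr i
    obtain ⟨ridx, rfl⟩ := List.mem_iff_get.mp hr
    exact q5 i ridx
  · intro r hr c hc
    obtain ⟨ridx, rfl⟩ := List.mem_iff_get.mp hr
    obtain ⟨cidx, rfl⟩ := List.mem_iff_get.mp hc
    exact q6 cidx ridx
  · intro j hj m
    have e1 : {x : M | SType rs1 x m ∧ IsNew cs (fun i => v (vs.get i)) x}
        = {x : M | patM rs1 x = patM rs1 m ∧ IsNew cs (fun i => v (vs.get i)) x} := by
      ext x
      exact and_congr_left fun _ => stype_iff_pat rs1 x m
    have e2 : {y : M' | SType rs1 m y ∧ IsNew cs (fun i => v' (vs.get i)) y}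
        = {y : M' | patM rs1 y = patM rs1 m ∧ IsNew cs (fun i => v' (vs.get i)) y} := by
      ext y
      rw [Set.mem_setOf_eq, Set.mem_setOf_eq, and_congr_left_iff]
      intro _
      rw [stype_iff_pat rs1 m y, eq_comm]
    rw [e1, e2, atLeast_iff_capN hj, atLeast_iff_capN hj, q7 (patM rs1 m)]
  · intro j hj m'
    have e1 : {x : M | SType rs1 x m' ∧ IsNew cs (fun i => v (vs.get i)) x}
        = {x : M | patM rs1 x = patM rs1 m' ∧ IsNew cs (fun i => v (vs.get i)) x} := by
      ext x
      exact and_congr_left fun _ => stype_iff_pat rs1 x m'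
    have e2 : {y : M' | SType rs1 y m' ∧ IsNew cs (fun i => v' (vs.get i)) y}
        = {y : M' | patM rs1 y = patM rs1 m' ∧ IsNew cs (fun i => v' (vs.get i)) y} := by
      ext y
      exact and_congr_left fun _ => stype_iff_pat rs1 y m'
    rw [e1, e2, atLeast_iff_capN hj, atLeast_iff_capN hj, q7 (patM rs1 m')]


/-! ### Defining formulas -/

noncomputable def bfISup {L : Language} {α : Type*} {n : ℕ} {β : Type*} (s : Finset β)
    (f : β → L.BoundedFormula α n) : L.BoundedFormula α n :=
  (s.toList.map f).foldr (· ⊔ ·) ⊥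

lemma realize_bfISup {L : Language} {α : Type*} {n : ℕ} {β : Type*} {M : Type*} [L.Structure M]
    (s : Finset β) (f : β → L.BoundedFormula α n) (v : α → M) (v' : Fin n → M) :
    (bfISup s f).Realize v v' ↔ ∃ b ∈ s, (f b).Realize v v' := by
  simp only [bfISup, BoundedFormula.realize_foldr_sup, List.mem_map, Finset.mem_toList,
    exists_exists_and_eq_and]

noncomputable def bfIInf {L : Language} {α : Type*} {n : ℕ} {β : Type*} (s : Finset β)
    (f : β → L.BoundedFormula α n) : L.BoundedFormula α n :=
  (s.toList.map f).foldr (· ⊓ ·) ⊤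

lemma realize_bfIInf {L : Language} {α : Type*} {n : ℕ} {β : Type*} {M : Type*} [L.Structure M]
    (s : Finset β) (f : β → L.BoundedFormula α n) (v : α → M) (v' : Fin n → M) :
    (bfIInf s f).Realize v v' ↔ ∀ b ∈ s, (f b).Realize v v' := by
  simp only [bfIInf, BoundedFormula.realize_foldr_inf, List.mem_map, Finset.mem_toList,
    forall_exists_index, and_imp, forall_apply_eq_imp_iff₂]

def bfb {n : ℕ} (b : Bool) (f : K.BoundedFormula α n) : K.BoundedFormula α n :=
  if b then f else f.not

lemma realize_bfb {n : ℕ} {b : Bool} {f : K.BoundedFormula α n} {v : α → M} {xs : Fin n → M} :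
    (bfb b f).Realize v xs ↔ (b = true ↔ f.Realize v xs) := by
  cases b <;> simp [bfb, BoundedFormula.realize_not]

lemma realize_bfb' {b : Bool} {f : K.Formula α} {v : α → M} :
    Formula.Realize (bfb b f) v ↔ (b = true ↔ Formula.Realize f v) :=
  realize_bfb

lemma decide_eq_iff (P : Prop) [Decidable P] (b : Bool) : (decide P = b) ↔ (b = true ↔ P) := by
  cases b <;> simp

lemma formula_realize_iInf {β : Type*} (s : Finset β) (f : β → K.Formula α) (v : α → M) :
    Formula.Realize (bfIInf s f) v ↔ ∀ b ∈ s, (f b).Realize v :=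
  realize_bfIInf s f v default

lemma formula_realize_bdEqual (t₁ t₂ : K.Term (α ⊕ Fin 0)) (v : α → M) :
    Formula.Realize (Term.bdEqual t₁ t₂) v ↔
      t₁.realize (Sum.elim v default) = t₂.realize (Sum.elim v default) :=
  BoundedFormula.realize_bdEqual t₁ t₂

lemma atLeast_iff_inj {X : Type*} {j : ℕ} {S : Set X} :
    AtLeast j S ↔ ∃ xs : Fin j → X, Function.Injective xs ∧ ∀ i, xs i ∈ S := by
  classical
  constructor
  · rintro ⟨t, ht, hsub⟩
    obtain e := t.equivFinOfCardEq ht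
    refine ⟨fun i => (e.symm i : X), ?_, fun i => hsub (e.symm i).2⟩
    intro i1 i2 h12
    have := e.symm.injective (Subtype.ext h12)
    exact this
  · rintro ⟨xs, hinj, hmem⟩
    refine ⟨Finset.univ.image xs, ?_, ?_⟩
    · rw [Finset.card_image_of_injective _ hinj, Finset.card_univ, Fintype.card_fin]
    · intro x hx
      simp only [Finset.coe_image, Finset.coe_univ, Set.image_univ, Set.mem_range] at hx
      obtain ⟨i, rfl⟩ := hx
      exact hmem i

noncomputable def atLeastBody (vs : List α) (cs : List (K.Functions 0))
    (rs1 : List (K.Relations 1)) (j : ℕ) (τ : Fin rs1.length → Bool) : K.BoundedFormula α j :=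
  (bfIInf Finset.univ fun p : Fin j × Fin j =>
    if p.1 = p.2 then ⊤
    else (Term.bdEqual (Term.var (Sum.inr p.1)) (Term.var (Sum.inr p.2))).not) ⊓
  bfIInf Finset.univ (fun i : Fin j =>
    (bfIInf Finset.univ fun l : Fin rs1.length =>
      bfb (τ l) (BoundedFormula.rel (rs1.get l) ![Term.var (Sum.inr i)])) ⊓
    ((bfIInf Finset.univ fun g : Fin vs.length =>
      (Term.bdEqual (Term.var (Sum.inr i)) (Term.var (Sum.inl (vs.get g)))).not) ⊓
    (bfIInf Finset.univ fun c : Fin cs.length =>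
      (Term.bdEqual (Term.var (Sum.inr i)) (constTerm (cs.get c))).not)))

noncomputable def atLeastF (vs : List α) (cs : List (K.Functions 0))
    (rs1 : List (K.Relations 1)) (j : ℕ) (τ : Fin rs1.length → Bool) : K.Formula α :=
  (atLeastBody vs cs rs1 j τ).exs

lemma patM_eq_iff (rs1 : List (K.Relations 1)) (x : M) (l : Fin rs1.length) (b : Bool) :
    patM rs1 x l = b ↔ (b = true ↔ rel1 M (rs1.get l) x) := by
  unfold patM
  exact @decide_eq_iff (rel1 M (rs1.get l) x) (Classical.propDecidable _) b

lemma realize_atLeastF (vs : List α) (cs : List (K.Functions 0)) (rs1 : List (K.Relations 1))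
    (v : α → M) (j : ℕ) (τ : Fin rs1.length → Bool) :
    (atLeastF vs cs rs1 j τ).Realize v ↔
      AtLeast j {x : M | patM rs1 x = τ ∧ IsNew cs (fun i => v (vs.get i)) x} := by
  rw [atLeastF, atLeast_iff_inj, BoundedFormula.realize_exs]
  apply exists_congr
  intro xs
  rw [atLeastBody, BoundedFormula.realize_inf]
  apply and_congr
  · rw [realize_bfIInf]
    constructor
    · intro hp a b hab
      by_contra hne
      have := hp (a, b) (Finset.mem_univ _)
      rw [if_neg hne, BoundedFormula.realize_not, BoundedFormula.realize_bdEqual] at this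
      exact this (by simpa using hab)
    · intro hinj p _
      split_ifs with hpe
      · exact BoundedFormula.realize_top.2 trivial
      · rw [BoundedFormula.realize_not, BoundedFormula.realize_bdEqual]
        intro hh
        exact hpe (hinj (by simpa using hh))
  · rw [realize_bfIInf]
    constructor
    · intro hi i
      have := hi i (Finset.mem_univ i)
      rw [BoundedFormula.realize_inf, BoundedFormula.realize_inf,
        realize_bfIInf, realize_bfIInf,
        realize_bfIInf] at this
      obtain ⟨hty, hpar, hcst⟩ := this
      refine ⟨?_, ?_, ?_⟩
      · funext l
        have h2 := hty l (Finset.mem_univ l)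
        rw [realize_bfb, rel1_realize] at h2
        rw [patM_eq_iff]
        simpa using h2
      · intro g
        have h2 := hpar g (Finset.mem_univ g)
        rw [BoundedFormula.realize_not, BoundedFormula.realize_bdEqual] at h2
        simpa using h2
      · intro c hc
        obtain ⟨cidx, rfl⟩ := List.mem_iff_get.mp hc
        have h2 := hcst cidx (Finset.mem_univ cidx)
        rw [BoundedFormula.realize_not, BoundedFormula.realize_bdEqual,
          realize_constTerm] at h2
        simpa using h2
    · intro hmem i _
      obtain ⟨hpat, hnew1, hnew2⟩ := hmem i
      rw [BoundedFormula.realize_inf, BoundedFormula.realize_inf,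
        realize_bfIInf, realize_bfIInf,
        realize_bfIInf]
      refine ⟨?_, ?_, ?_⟩
      · intro l _
        rw [realize_bfb, rel1_realize]
        have := congrFun hpat l
        rw [patM_eq_iff] at this
        simpa using this
      · intro g _
        rw [BoundedFormula.realize_not, BoundedFormula.realize_bdEqual]
        simpa using hnew1 g
      · intro c _
        rw [BoundedFormula.realize_not, BoundedFormula.realize_bdEqual, realize_constTerm]
        simpa using hnew2 (cs.get c) (List.get_mem cs c)

lemma capN_eq_iff {X : Type*} {S : Set X} {B c : ℕ} (hc : c ≤ B) :
    capN B S = c ↔ (AtLeast c S ∧ (c < B → ¬ AtLeast (c + 1) S)) := by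
  constructor
  · intro he
    refine ⟨(atLeast_iff_capN hc).2 (he ▸ le_rfl), fun hlt hcon => ?_⟩
    have := (atLeast_iff_capN (show c + 1 ≤ B by omega)).1 hcon
    omega
  · rintro ⟨h1, h2⟩
    have hle : c ≤ capN B S := (atLeast_iff_capN hc).1 h1
    have hcap : capN B S ≤ B := by unfold capN; split_ifs <;> omega
    rcases Nat.lt_or_ge c B with hlt | hge
    · by_contra hne
      have hc1 : c + 1 ≤ capN B S := by omega
      exact h2 hlt ((atLeast_iff_capN (by omega)).2 hc1)
    · omega

noncomputable def cntF (vs : List α) (cs : List (K.Functions 0)) (rs1 : List (K.Relations 1))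
    (B : ℕ) (τ : Fin rs1.length → Bool) (c : ℕ) : K.Formula α :=
  atLeastF vs cs rs1 c τ ⊓ (if c = B then ⊤ else (atLeastF vs cs rs1 (c + 1) τ).not)

lemma realize_cntF (vs : List α) (cs : List (K.Functions 0)) (rs1 : List (K.Relations 1))
    {B : ℕ} (v : α → M) (τ : Fin rs1.length → Bool) {c : ℕ} (hc : c ≤ B) :
    (cntF vs cs rs1 B τ c).Realize v ↔
      capN B {x : M | patM rs1 x = τ ∧ IsNew cs (fun i => v (vs.get i)) x} = c := by
  rw [capN_eq_iff hc, cntF, Formula.realize_inf, realize_atLeastF]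
  apply and_congr Iff.rfl
  split_ifs with he
  · simp only [Formula.realize_top, true_iff]
    intro hlt
    exact absurd hlt (by omega)
  · rw [Formula.realize_not, realize_atLeastF]
    constructor
    · exact fun hn _ => hn
    · exact fun hn => hn (by omega)

noncomputable def absFormula (vs : List α) (cs : List (K.Functions 0))
    (rs0 : List (K.Relations 0)) (rs1 : List (K.Relations 1)) (B : ℕ)
    (a : AbsTy vs.length cs.length rs0.length rs1.length B) : K.Formula α :=
  (bfIInf Finset.univ fun p : Fin vs.length × Fin vs.length =>
    bfb (a.1 p.1 p.2)
      (Term.bdEqual (Term.var (Sum.inl (vs.get p.1))) (Term.var (Sum.inl (vs.get p.2))))) ⊓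
  ((bfIInf Finset.univ fun p : Fin vs.length × Fin cs.length =>
    bfb (a.2.1 p.1 p.2)
      (Term.bdEqual (Term.var (Sum.inl (vs.get p.1))) (constTerm (cs.get p.2)))) ⊓
  ((bfIInf Finset.univ fun p : Fin cs.length × Fin cs.length =>
    bfb (a.2.2.1 p.1 p.2)
      (Term.bdEqual (constTerm (cs.get p.1)) (constTerm (cs.get p.2)))) ⊓
  ((bfIInf Finset.univ fun r : Fin rs0.length =>
    bfb (a.2.2.2.1 r) (BoundedFormula.rel (rs0.get r) fun i => i.elim0)) ⊓
  ((bfIInf Finset.univ fun p : Fin vs.length × Fin rs1.length =>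
    bfb (a.2.2.2.2.1 p.1 p.2)
      (BoundedFormula.rel (rs1.get p.2) ![Term.var (Sum.inl (vs.get p.1))])) ⊓
  ((bfIInf Finset.univ fun p : Fin cs.length × Fin rs1.length =>
    bfb (a.2.2.2.2.2.1 p.1 p.2)
      (BoundedFormula.rel (rs1.get p.2) ![constTerm (cs.get p.1)])) ⊓
  (bfIInf Finset.univ fun τ : Fin rs1.length → Bool =>
    cntF vs cs rs1 B τ (a.2.2.2.2.2.2 τ).1))))))

lemma realize_absFormula (vs : List α) (cs : List (K.Functions 0))
    (rs0 : List (K.Relations 0)) (rs1 : List (K.Relations 1)) (B : ℕ)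
    (a : AbsTy vs.length cs.length rs0.length rs1.length B) (v : α → M) :
    (absFormula vs cs rs0 rs1 B a).Realize v ↔ absOf vs cs rs0 rs1 B v = a := by
  obtain ⟨a1, a2, a3, a4, a5, a6, a7⟩ := a
  unfold absFormula absOf AbsTy
  rw [Prod.mk.injEq, Prod.mk.injEq, Prod.mk.injEq, Prod.mk.injEq,
    Prod.mk.injEq, Prod.mk.injEq, Formula.realize_inf, Formula.realize_inf,
    Formula.realize_inf, Formula.realize_inf, Formula.realize_inf, Formula.realize_inf]
  apply and_congr
  · rw [formula_realize_iInf, funext_iff]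
    constructor
    · intro hf i
      funext j
      have := hf (i, j) (Finset.mem_univ _)
      rw [realize_bfb', formula_realize_bdEqual] at this
      rw [decide_eq_iff]
      simpa using this
    · intro hf p _
      rw [realize_bfb', formula_realize_bdEqual]
      have := congrFun (hf p.1) p.2
      rw [decide_eq_iff] at this
      simpa using this
  apply and_congr
  · rw [formula_realize_iInf, funext_iff]
    constructor
    · intro hf i
      funext c
      have := hf (i, c) (Finset.mem_univ _)
      rw [realize_bfb', formula_realize_bdEqual, realize_constTerm] at this
      rw [decide_eq_iff]
      simpa using this
    · intro hf p _
      rw [realize_bfb', formula_realize_bdEqual, realize_constTerm]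
      have := congrFun (hf p.1) p.2
      rw [decide_eq_iff] at this
      simpa using this
  apply and_congr
  · rw [formula_realize_iInf, funext_iff]
    constructor
    · intro hf c
      funext d
      have := hf (c, d) (Finset.mem_univ _)
      rw [realize_bfb', formula_realize_bdEqual, realize_constTerm, realize_constTerm] at this
      rw [decide_eq_iff]
      exact this
    · intro hf p _
      rw [realize_bfb', formula_realize_bdEqual, realize_constTerm, realize_constTerm]
      have := congrFun (hf p.1) p.2
      rw [decide_eq_iff] at this
      exact this
  apply and_congr
  · rw [formula_realize_iInf, funext_iff]
    constructor
    · intro hf r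
      have := hf r (Finset.mem_univ _)
      rw [realize_bfb'] at this
      rw [decide_eq_iff]
      rw [show Formula.Realize (BoundedFormula.rel (rs0.get r) fun i => i.elim0) v
          ↔ rel0 M (rs0.get r) from rel0_realize _ _ _ _] at this
      exact this
    · intro hf r _
      rw [realize_bfb',
        show Formula.Realize (BoundedFormula.rel (rs0.get r) fun i => i.elim0) v
          ↔ rel0 M (rs0.get r) from rel0_realize _ _ _ _]
      have := hf r
      rw [decide_eq_iff] at this
      exact this
  apply and_congr
  · rw [formula_realize_iInf, funext_iff]
    constructor
    · intro hf i
      funext l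
      have := hf (i, l) (Finset.mem_univ _)
      rw [realize_bfb',
        show Formula.Realize (BoundedFormula.rel (rs1.get l) ![Term.var (Sum.inl (vs.get i))]) v
          ↔ rel1 M (rs1.get l) ((![Term.var (Sum.inl (vs.get i))] 0).realize
            (Sum.elim v default)) from rel1_realize _ _ _ _] at this
      rw [decide_eq_iff]
      simpa using this
    · intro hf p _
      rw [realize_bfb',
        show Formula.Realize (BoundedFormula.rel (rs1.get p.2)
            ![Term.var (Sum.inl (vs.get p.1))]) v
          ↔ rel1 M (rs1.get p.2) ((![Term.var (Sum.inl (vs.get p.1))] 0).realize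
            (Sum.elim v default)) from rel1_realize _ _ _ _]
      have := congrFun (hf p.1) p.2
      rw [decide_eq_iff] at this
      simpa using this
  apply and_congr
  · rw [formula_realize_iInf, funext_iff]
    constructor
    · intro hf c
      funext l
      have := hf (c, l) (Finset.mem_univ _)
      rw [realize_bfb',
        show Formula.Realize (BoundedFormula.rel (rs1.get l) ![constTerm (cs.get c)]) v
          ↔ rel1 M (rs1.get l) ((![constTerm (cs.get c)] 0).realize (Sum.elim v default))
          from rel1_realize _ _ _ _] at this
      rw [decide_eq_iff]
      rw [show (![constTerm (cs.get c)] 0).realize (Sum.elim v default)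
          = cVal K M (cs.get c) from realize_constTerm _ _] at this
      exact this
    · intro hf p _
      rw [realize_bfb',
        show Formula.Realize (BoundedFormula.rel (rs1.get p.2) ![constTerm (cs.get p.1)]) v
          ↔ rel1 M (rs1.get p.2) ((![constTerm (cs.get p.1)] 0).realize (Sum.elim v default))
          from rel1_realize _ _ _ _,
        show (![constTerm (cs.get p.1)] 0).realize (Sum.elim v default)
          = cVal K M (cs.get p.1) from realize_constTerm _ _]
      have := congrFun (hf p.1) p.2
      rw [decide_eq_iff] at this
      exact this
  · rw [formula_realize_iInf, funext_iff]
    constructor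
    · intro hf τ
      have := hf τ (Finset.mem_univ _)
      rw [realize_cntF vs cs rs1 v τ (Fin.is_le (a7 τ))] at this
      exact Fin.ext this
    · intro hf τ _
      rw [realize_cntF vs cs rs1 v τ (Fin.is_le (a7 τ))]
      exact congrArg Fin.val (hf τ)

end Abstraction

/-! ### Transfer of monadic predicates along a match -/

section Transfer

variable {k : ℕ}

def csSum (k : ℕ) (cs : List (K.Functions 0)) :
    List ((K.sum (monadicLang (Fin k))).Functions 0) := cs.map Sum.inl

def rs0Sum (k : ℕ) (rs0 : List (K.Relations 0)) :
    List ((K.sum (monadicLang (Fin k))).Relations 0) := rs0.map Sum.inl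

def rs1Sum (k : ℕ) (rs1 : List (K.Relations 1)) :
    List ((K.sum (monadicLang (Fin k))).Relations 1) :=
  rs1.map Sum.inl ++ (List.finRange k).map
    (fun j => (Sum.inr j : K.Relations 1 ⊕ Fin k))

lemma mem_rs1Sum_inl (rs1 : List (K.Relations 1)) {r : K.Relations 1} (hr : r ∈ rs1) :
    (Sum.inl r : K.Relations 1 ⊕ Fin k) ∈ rs1Sum k rs1 :=
  List.mem_append_left _ (List.mem_map_of_mem hr)

lemma mem_rs1Sum_inr (rs1 : List (K.Relations 1)) (j : Fin k) :
    (Sum.inr j : K.Relations 1 ⊕ Fin k) ∈ rs1Sum k rs1 :=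
  List.mem_append_right _ (List.mem_map_of_mem (List.mem_finRange j))

lemma mem_rs1Sum_elim (rs1 : List (K.Relations 1)) {r : K.Relations 1 ⊕ Fin k}
    (hr : r ∈ rs1Sum k rs1) : (∃ r₀ ∈ rs1, r = Sum.inl r₀) ∨ (∃ j : Fin k, r = Sum.inr j) := by
  rcases List.mem_append.mp hr with h | h
  · obtain ⟨r₀, hr₀, rfl⟩ := List.mem_map.mp h
    exact Or.inl ⟨r₀, hr₀, rfl⟩
  · obtain ⟨j, _, rfl⟩ := List.mem_map.mp h
    exact Or.inr ⟨j, rfl⟩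

theorem transfer {M M' : Type*} [K.Structure M] [K.Structure M']
    (cs : List (K.Functions 0)) (rs0 : List (K.Relations 0)) (rs1 : List (K.Relations 1))
    {p : ℕ} (w : Fin p → M) (w' : Fin p → M') (q : ℕ) (P : Fin k → M → Prop)
    (h : Match cs rs0 rs1 (2 ^ k * (q + 1)) w w') :
    ∃ P' : Fin k → M' → Prop,
      letI : (monadicLang (Fin k)).Structure M := monadicStructure P
      letI : (monadicLang (Fin k)).Structure M' := monadicStructure P'
      Match (csSum k cs) (rs0Sum k rs0) (rs1Sum k rs1) q w w' := by
  classical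
  set fp : M → Fin k → Bool := fun x j => decide (P j x) with hfp
  have hcoarse : ∀ τ : Fin rs1.length → Bool, ∀ j, j ≤ 2 ^ k * (q + 1) →
      (AtLeast j {x : M | patM rs1 x = τ ∧ IsNew cs w x} ↔
        AtLeast j {y : M' | patM rs1 y = τ ∧ IsNew cs w' y}) := by
    intro τ j hj
    by_cases hM : ∃ x₀ : M, patM rs1 x₀ = τ ∧ IsNew cs w x₀
    · obtain ⟨x₀, hx₀, _⟩ := hM
      have hc := h.cnt j hj x₀
      have e1 : {x : M | SType rs1 x x₀ ∧ IsNew cs w x}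
          = {x : M | patM rs1 x = τ ∧ IsNew cs w x} := by
        ext x
        rw [Set.mem_setOf_eq, Set.mem_setOf_eq, stype_iff_pat, hx₀]
      have e2 : {y : M' | SType rs1 x₀ y ∧ IsNew cs w' y}
          = {y : M' | patM rs1 y = τ ∧ IsNew cs w' y} := by
        ext y
        rw [Set.mem_setOf_eq, Set.mem_setOf_eq, stype_iff_pat, hx₀]
        exact and_congr_left fun _ => eq_comm
      rwa [e1, e2] at hc
    · by_cases hM' : ∃ y₀ : M', patM rs1 y₀ = τ ∧ IsNew cs w' y₀
      · obtain ⟨y₀, hy₀, _⟩ := hM'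
        have hc := h.cnt' j hj y₀
        have e1 : {x : M | SType rs1 x y₀ ∧ IsNew cs w x}
            = {x : M | patM rs1 x = τ ∧ IsNew cs w x} := by
          ext x
          rw [Set.mem_setOf_eq, Set.mem_setOf_eq, stype_iff_pat, hy₀]
        have e2 : {y : M' | SType rs1 y y₀ ∧ IsNew cs w' y}
            = {y : M' | patM rs1 y = τ ∧ IsNew cs w' y} := by
          ext y
          rw [Set.mem_setOf_eq, Set.mem_setOf_eq, stype_iff_pat, hy₀]
        rwa [e1, e2] at hc
      · push_neg at hM hM'
        have e1 : {x : M | patM rs1 x = τ ∧ IsNew cs w x} = (∅ : Set M) := by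
          ext x
          simp only [Set.mem_setOf_eq, Set.mem_empty_iff_false, iff_false, not_and]
          exact hM x
        have e2 : {y : M' | patM rs1 y = τ ∧ IsNew cs w' y} = (∅ : Set M') := by
          ext y
          simp only [Set.mem_setOf_eq, Set.mem_empty_iff_false, iff_false, not_and]
          exact hM' y
        rw [e1, e2]
        constructor
        · intro ha
          obtain rfl := atLeast_empty ha
          exact atLeast_zero _
        · intro ha
          obtain rfl := atLeast_empty ha
          exact atLeast_zero _
  have hcardfun : Fintype.card (Fin k → Bool) = 2 ^ k := by simp
  have hrelabel : ∀ τ : Fin rs1.length → Bool, ∃ G : M' → Fin k → Bool,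
      ∀ (σ : Fin k → Bool) (j : ℕ), j ≤ q →
        (AtLeast j {x | x ∈ {x : M | patM rs1 x = τ ∧ IsNew cs w x} ∧ fp x = σ} ↔
          AtLeast j {y | y ∈ {y : M' | patM rs1 y = τ ∧ IsNew cs w' y} ∧ G y = σ}) := by
    intro τ
    exact relabel_lemma _ _ fp q (fun j hj => hcoarse τ j (by rwa [hcardfun] at hj))
  choose G hG using hrelabel
  set lbl : M' → Fin k → Bool := fun y =>
    if hy : ∃ g, y = w' g then fp (w hy.choose)
    else if hy2 : ∃ cidx : Fin cs.length, y = cVal K M' (cs.get cidx) then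
      fp (cVal K M (cs.get hy2.choose))
    else G (patM rs1 y) y with hlbl
  have hlblw : ∀ g, lbl (w' g) = fp (w g) := by
    intro g
    have hy : ∃ g₁, w' g = w' g₁ := ⟨g, rfl⟩
    rw [hlbl]
    simp only [dif_pos hy]
    have hch : w' g = w' hy.choose := hy.choose_spec
    have hwg : w g = w hy.choose := (h.eq g hy.choose).2 hch
    rw [← hwg]
  have hlblc : ∀ cidx : Fin cs.length,
      lbl (cVal K M' (cs.get cidx)) = fp (cVal K M (cs.get cidx)) := by
    intro c
    rw [hlbl]
    by_cases hy : ∃ g₁, cVal K M' (cs.get c) = w' g₁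
    · simp only [dif_pos hy]
      have hch : cVal K M' (cs.get c) = w' hy.choose := hy.choose_spec
      have hwg : w hy.choose = cVal K M (cs.get c) :=
        (h.eqc _ (List.get_mem cs c) hy.choose).2 hch.symm
      rw [hwg]
    · simp only [dif_neg hy]
      have hy2 : ∃ cidx, cVal K M' (cs.get c) = cVal K M' (cs.get cidx) := ⟨c, rfl⟩
      simp only [dif_pos hy2]
      have hch : cVal K M' (cs.get c) = cVal K M' (cs.get hy2.choose) := hy2.choose_spec
      have hcc : cVal K M (cs.get c) = cVal K M (cs.get hy2.choose) :=
        (h.cc _ (List.get_mem cs c) _ (List.get_mem cs hy2.choose)).2 hch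
      rw [← hcc]
  have hlblnew : ∀ y, IsNew cs w' y → lbl y = G (patM rs1 y) y := by
    intro y hnew
    rw [hlbl]
    have hy : ¬ ∃ g, y = w' g := fun ⟨g, hg⟩ => hnew.1 g hg
    have hy2 : ¬ ∃ cidx : Fin cs.length, y = cVal K M' (cs.get cidx) :=
      fun ⟨c, hc⟩ => hnew.2 _ (List.get_mem cs c) hc
    simp only [dif_neg hy, dif_neg hy2]
  refine ⟨fun j y => lbl y j = true, ?_⟩
  letI : (monadicLang (Fin k)).Structure M := monadicStructure P
  letI : (monadicLang (Fin k)).Structure M' := monadicStructure (fun j y => lbl y j = true)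
  -- characterizations of SType over the sum language
  have hstMM' : ∀ (x : M) (y : M'), SType (rs1Sum k rs1) x y ↔
      (patM rs1 x = patM rs1 y ∧ fp x = lbl y) := by
    intro x y
    constructor
    · intro hst
      constructor
      · funext l
        exact decide_eq_decide.2 (hst (Sum.inl (rs1.get l))
          (mem_rs1Sum_inl rs1 (List.get_mem rs1 l)))
      · funext j
        have hj := hst (Sum.inr j) (mem_rs1Sum_inr rs1 j)
        exact (decide_eq_iff _ _).2 hj.symm
    · rintro ⟨h1, h2⟩ r hr
      rcases mem_rs1Sum_elim rs1 hr with ⟨r₀, hr₀, rfl⟩ | ⟨j, rfl⟩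
      · obtain ⟨l, rfl⟩ := List.mem_iff_get.mp hr₀
        exact decide_eq_decide.1 (congrFun h1 l)
      · exact ((decide_eq_iff _ _).1 (congrFun h2 j)).symm
  have hstMM : ∀ (x x₀ : M), SType (rs1Sum k rs1) x x₀ ↔
      (patM rs1 x = patM rs1 x₀ ∧ fp x = fp x₀) := by
    intro x x₀
    constructor
    · intro hst
      constructor
      · funext l
        exact decide_eq_decide.2 (hst (Sum.inl (rs1.get l))
          (mem_rs1Sum_inl rs1 (List.get_mem rs1 l)))
      · funext j
        exact decide_eq_decide.2 (hst (Sum.inr j) (mem_rs1Sum_inr rs1 j))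
    · rintro ⟨h1, h2⟩ r hr
      rcases mem_rs1Sum_elim rs1 hr with ⟨r₀, hr₀, rfl⟩ | ⟨j, rfl⟩
      · obtain ⟨l, rfl⟩ := List.mem_iff_get.mp hr₀
        exact decide_eq_decide.1 (congrFun h1 l)
      · exact decide_eq_decide.1 (congrFun h2 j)
  have hstM'M' : ∀ (y y₀ : M'), SType (rs1Sum k rs1) y y₀ ↔
      (patM rs1 y = patM rs1 y₀ ∧ lbl y = lbl y₀) := by
    intro y y₀
    constructor
    · intro hst
      constructor
      · funext l
        exact decide_eq_decide.2 (hst (Sum.inl (rs1.get l))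
          (mem_rs1Sum_inl rs1 (List.get_mem rs1 l)))
      · funext j
        have hj := hst (Sum.inr j) (mem_rs1Sum_inr rs1 j)
        exact Bool.eq_iff_iff.2 hj
    · rintro ⟨h1, h2⟩ r hr
      rcases mem_rs1Sum_elim rs1 hr with ⟨r₀, hr₀, rfl⟩ | ⟨j, rfl⟩
      · obtain ⟨l, rfl⟩ := List.mem_iff_get.mp hr₀
        exact decide_eq_decide.1 (congrFun h1 l)
      · exact Bool.eq_iff_iff.1 (congrFun h2 j)
  have hnewM : ∀ x : M, IsNew (csSum k cs) w x ↔ IsNew cs w x := by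
    intro x
    unfold IsNew
    refine and_congr_right fun _ => ?_
    constructor
    · intro hc c hcc
      exact hc (Sum.inl c) (List.mem_map_of_mem hcc)
    · rintro hc c' hc'
      obtain ⟨c, hcc, rfl⟩ := List.mem_map.mp hc'
      exact hc c hcc
  have hnewM' : ∀ y : M', IsNew (csSum k cs) w' y ↔ IsNew cs w' y := by
    intro y
    unfold IsNew
    refine and_congr_right fun _ => ?_
    constructor
    · intro hc c hcc
      exact hc (Sum.inl c) (List.mem_map_of_mem hcc)
    · rintro hc c' hc'
      obtain ⟨c, hcc, rfl⟩ := List.mem_map.mp hc'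
      exact hc c hcc
  refine ⟨h.eq, ?_, ?_, ?_, ?_, ?_, ?_, ?_⟩
  · rintro c' hc' g
    obtain ⟨c, hcc, rfl⟩ := List.mem_map.mp hc'
    exact h.eqc c hcc g
  · rintro c' hc' d' hd'
    obtain ⟨c, hcc, rfl⟩ := List.mem_map.mp hc'
    obtain ⟨d, hdd, rfl⟩ := List.mem_map.mp hd'
    exact h.cc c hcc d hdd
  · rintro r' hr'
    obtain ⟨r, hrr, rfl⟩ := List.mem_map.mp hr'
    exact h.r0 r hrr
  · rintro r' hr' g
    rcases mem_rs1Sum_elim rs1 hr' with ⟨r₀, hr₀, rfl⟩ | ⟨j, rfl⟩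
    · exact h.r1 r₀ hr₀ g
    · show P j (w g) ↔ (lbl (w' g) j = true)
      rw [hlblw g]
      simp [hfp]
  · rintro r' hr' c' hc'
    obtain ⟨c, hcc, rfl⟩ := List.mem_map.mp hc'
    obtain ⟨cidx, rfl⟩ := List.mem_iff_get.mp hcc
    rcases mem_rs1Sum_elim rs1 hr' with ⟨r₀, hr₀, rfl⟩ | ⟨j, rfl⟩
    · exact h.r1c r₀ hr₀ _ (List.get_mem cs cidx)
    · show P j (cVal K M (cs.get cidx)) ↔ (lbl (cVal K M' (cs.get cidx)) j = true)
      rw [hlblc cidx]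
      simp [hfp]
  · intro j hj m₀
    have e1 : {x : M | SType (rs1Sum k rs1) x m₀ ∧ IsNew (csSum k cs) w x}
        = {x | x ∈ {x : M | patM rs1 x = patM rs1 m₀ ∧ IsNew cs w x} ∧ fp x = fp m₀} := by
      ext x
      simp only [Set.mem_setOf_eq]
      rw [hstMM x m₀, hnewM x]
      tauto
    have e2 : {y : M' | SType (rs1Sum k rs1) m₀ y ∧ IsNew (csSum k cs) w' y}
        = {y | y ∈ {y : M' | patM rs1 y = patM rs1 m₀ ∧ IsNew cs w' y} ∧
            G (patM rs1 m₀) y = fp m₀} := by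
      ext y
      simp only [Set.mem_setOf_eq]
      rw [hstMM' m₀ y, hnewM' y]
      constructor
      · rintro ⟨⟨h1, h2⟩, h3⟩
        refine ⟨⟨h1.symm, h3⟩, ?_⟩
        rw [h1, ← hlblnew y h3, ← h2]
      · rintro ⟨⟨h1, h2⟩, h3⟩
        refine ⟨⟨h1.symm, ?_⟩, h2⟩
        rw [hlblnew y h2, h1, h3]
    rw [e1, e2]
    exact hG (patM rs1 m₀) (fp m₀) j hj
  · intro j hj m₀'
    have e1 : {x : M | SType (rs1Sum k rs1) x m₀' ∧ IsNew (csSum k cs) w x}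
        = {x | x ∈ {x : M | patM rs1 x = patM rs1 m₀' ∧ IsNew cs w x} ∧ fp x = lbl m₀'} := by
      ext x
      simp only [Set.mem_setOf_eq]
      rw [hstMM' x m₀', hnewM x]
      tauto
    have e2 : {y : M' | SType (rs1Sum k rs1) y m₀' ∧ IsNew (csSum k cs) w' y}
        = {y | y ∈ {y : M' | patM rs1 y = patM rs1 m₀' ∧ IsNew cs w' y} ∧
            G (patM rs1 m₀') y = lbl m₀'} := by
      ext y
      simp only [Set.mem_setOf_eq]
      rw [hstM'M' y m₀', hnewM' y]
      constructor
      · rintro ⟨⟨h1, h2⟩, h3⟩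
        refine ⟨⟨h1, h3⟩, ?_⟩
        rw [← h1, ← hlblnew y h3, h2]
      · rintro ⟨⟨h1, h2⟩, h3⟩
        refine ⟨⟨h1, ?_⟩, h2⟩
        rw [hlblnew y h2, h1, h3]
    rw [e1, e2]
    exact hG (patM rs1 m₀') (lbl m₀') j hj

end Transfer

/-! ### Formula-level iSup realization -/

lemma formula_realize_iSup {β : Type*} (s : Finset β) (f : β → K.Formula α)
    {M : Type*} [K.Structure M] (v : α → M) :
    Formula.Realize (bfISup s f) v ↔ ∃ b ∈ s, Formula.Realize (f b) v :=
  realize_bfISup s f v default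

end MonadicElim

open MonadicElim

theorem predicate_elimination_monadic_simultaneous (L : FirstOrder.Language)
    (hfun : ∀ n, L.Functions n → n = 0)
    (hrel : ∀ n, L.Relations n → n ≤ 1)
    (k : ℕ)
    (α : Type*) (φ : (L.sum (monadicLang (Fin k))).Formula α) :
    ∃ ψ : L.Formula α,
      ∀ (M : Type*) [L.Structure M] (v : α → M),
        ψ.Realize v ↔
          ∃ P : Fin k → M → Prop,
            letI : (monadicLang (Fin k)).Structure M := monadicStructure P
            φ.Realize v := by
  classical
  have hfun' : ∀ n, (L.sum (monadicLang (Fin k))).Functions n → n = 0 := by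
    rintro n (f | f)
    · exact hfun n f
    · exact f.elim
  have hrel' : ∀ n, (L.sum (monadicLang (Fin k))).Relations n → n ≤ 1 := by
    rintro n (r | r)
    · exact hrel n r
    · cases n with
      | zero => exact r.elim
      | succ n => cases n with
        | zero => exact le_rfl
        | succ n => exact r.elim
  obtain ⟨vs, cs', rs0', rs1', hOU⟩ := formula_extract hfun' hrel' φ
  set cs : List (L.Functions 0) := cs'.filterMap Sum.getLeft? with hcs
  set rs0 : List (L.Relations 0) := rs0'.filterMap Sum.getLeft? with hrs0
  set rs1 : List (L.Relations 1) := rs1'.filterMap Sum.getLeft? with hrs1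
  have hOU2 : OnlyUses vs (csSum k cs) (rs0Sum k rs0) (rs1Sum k rs1) φ := by
    refine hOU.mono (fun a ha => ha) ?_ ?_ ?_
    · rintro (c | c) hc
      · refine List.mem_map.mpr ⟨c, ?_, rfl⟩
        exact List.mem_filterMap.mpr ⟨Sum.inl c, hc, rfl⟩
      · exact c.elim
    · rintro (r | r) hr
      · refine List.mem_map.mpr ⟨r, ?_, rfl⟩
        exact List.mem_filterMap.mpr ⟨Sum.inl r, hr, rfl⟩
      · exact r.elim
    · rintro (r | j) hr
      · apply mem_rs1Sum_inl
        exact List.mem_filterMap.mpr ⟨Sum.inl r, hr, rfl⟩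
      · exact mem_rs1Sum_inr rs1 j
  set q := QD φ with hq
  set B := 2 ^ k * (q + 1) with hB
  set Good : AbsTy vs.length cs.length rs0.length rs1.length B → Prop := fun a =>
    ∀ (M : Type _) (_ : L.Structure M) (v : α → M),
      absOf vs cs rs0 rs1 B v = a →
      ∃ P : Fin k → M → Prop,
        letI : (monadicLang (Fin k)).Structure M := monadicStructure P
        φ.Realize v
    with hGood
  refine ⟨bfISup (Finset.univ.filter Good)
    (fun a => absFormula vs cs rs0 rs1 B a), ?_⟩
  intro M instM v
  rw [formula_realize_iSup]
  constructor
  · rintro ⟨a, ha, hra⟩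
    have hg : Good a := (Finset.mem_filter.mp ha).2
    exact hg M instM v ((realize_absFormula vs cs rs0 rs1 B a v).1 hra)
  · rintro ⟨P, hφ⟩
    refine ⟨absOf vs cs rs0 rs1 B v, ?_, (realize_absFormula vs cs rs0 rs1 B _ v).2 rfl⟩
    rw [Finset.mem_filter]
    refine ⟨Finset.mem_univ _, ?_⟩
    intro M' instM' v' habs'
    have hmatch : Match cs rs0 rs1 B (fun i => v (vs.get i)) (fun i => v' (vs.get i)) :=
      (match_of_absOf_eq vs cs rs0 rs1 B habs').symm
    obtain ⟨P', hMatch'⟩ := transfer cs rs0 rs1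
      (fun i => v (vs.get i)) (fun i => v' (vs.get i)) q P hmatch
    refine ⟨P', ?_⟩
    letI : (monadicLang (Fin k)).Structure M := monadicStructure P
    letI : (monadicLang (Fin k)).Structure M' := monadicStructure P'
    exact (invariance φ q le_rfl hOU2 v default v' default
      (match_zero hMatch' default default)).1 hφ
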